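/- arXiv:1607.01053 — 9 statements merged into one kernel-verified Lean document; each statement's English description precedes it below -/
import Mathlib

section
/- Let (fₙ)_{n≥0} be a real-valued martingale with differences dₙ = fₙ - f_{n-1} satisfying ‖dₙ‖_∞ ≤ 1 for all n ≥ 1. Then for any real coefficients (xₖ), E[exp(Σ_{k=1}^n xₖ dₖ)] ≤ exp(Σ_{k=1}^n xₖ²/2). -/
open MeasureTheory

theorem azuma_inequality
    {Ω : Type*} {m : MeasurableSpace Ω} {μ : Measure Ω} [IsProbabilityMeasure μ]
    (ℱ : Filtration ℕ m) (f : ℕ → Ω → ℝ)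
    (hmart : Martingale f ℱ μ)
    (hbdd : ∀ n : ℕ, 1 ≤ n → ∀ᵐ ω ∂μ, |f n ω - f (n - 1) ω| ≤ 1)
    (x : ℕ → ℝ) (n : ℕ) :
    ∫⁻ ω, ENNReal.ofReal
        (Real.exp (∑ k ∈ Finset.Icc 1 n, x k * (f k ω - f (k - 1) ω))) ∂μ
      ≤ ENNReal.ofReal (Real.exp (∑ k ∈ Finset.Icc 1 n, (x k) ^ 2 / 2)) := by
  classical
  -- uniform a.e. bound on all differences
  have hbdd' : ∀ᵐ ω ∂μ, ∀ k : ℕ, |f k ω - f (k - 1) ω| ≤ 1 := by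
    rw [ae_all_iff]
    intro k
    rcases Nat.eq_zero_or_pos k with h | h
    · subst h
      filter_upwards with ω
      simp
    · exact hbdd k h
  -- strong measurability of the exponential sums w.r.t. ℱ n
  have hgsm : ∀ N : ℕ, StronglyMeasurable[ℱ N]
      (fun ω => Real.exp (∑ k ∈ Finset.Icc 1 N, x k * (f k ω - f (k - 1) ω))) := by
    intro N
    refine Real.continuous_exp.comp_stronglyMeasurable ?_
    refine Finset.stronglyMeasurable_fun_sum _ fun k hk => ?_
    have hk' : k ≤ N := (Finset.mem_Icc.mp hk).2
    have h1 : StronglyMeasurable[ℱ N] (f k) := (hmart.stronglyAdapted k).mono (ℱ.mono hk')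
    have h2 : StronglyMeasurable[ℱ N] (f (k - 1)) :=
      (hmart.stronglyAdapted (k - 1)).mono (ℱ.mono ((Nat.sub_le k 1).trans hk'))
    exact (h1.sub h2).const_mul (x k)
  -- a.e. bound on the exponential sums
  have hgbd : ∀ N : ℕ, ∀ᵐ ω ∂μ,
      ‖Real.exp (∑ k ∈ Finset.Icc 1 N, x k * (f k ω - f (k - 1) ω))‖
        ≤ Real.exp (∑ k ∈ Finset.Icc 1 N, |x k|) := by
    intro N
    filter_upwards [hbdd'] with ω hω
    rw [Real.norm_eq_abs, Real.abs_exp]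
    refine Real.exp_le_exp.mpr (Finset.sum_le_sum fun k _ => ?_)
    calc x k * (f k ω - f (k - 1) ω) ≤ |x k * (f k ω - f (k - 1) ω)| := le_abs_self _
      _ = |x k| * |f k ω - f (k - 1) ω| := abs_mul _ _
      _ ≤ |x k| * 1 := mul_le_mul_of_nonneg_left (hω k) (abs_nonneg _)
      _ = |x k| := mul_one _
  -- integrability of the exponential sums
  have hgint : ∀ N : ℕ, Integrable
      (fun ω => Real.exp (∑ k ∈ Finset.Icc 1 N, x k * (f k ω - f (k - 1) ω))) μ := by
    intro N
    refine Integrable.mono' (integrable_const (Real.exp (∑ k ∈ Finset.Icc 1 N, |x k|)))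
      (((hgsm N).mono (ℱ.le N)).aestronglyMeasurable) (hgbd N)
  -- key orthogonality: ∫ g ⬝ (f (m+1) - f m) = 0 for bounded ℱ m-measurable g
  have hzero : ∀ (M : ℕ) (g : Ω → ℝ) (C : ℝ), StronglyMeasurable[ℱ M] g → Integrable g μ →
      (∀ᵐ ω ∂μ, ‖g ω‖ ≤ C) →
      ∫ ω, g ω * (f (M + 1) ω - f M ω) ∂μ = 0 := by
    intro M g C hgm hgi hC
    have hfdiff : Integrable (fun ω => f (M + 1) ω - f M ω) μ :=
      (hmart.integrable _).sub (hmart.integrable _)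
    have hprod : Integrable (fun ω => g ω * (f (M + 1) ω - f M ω)) μ :=
      hfdiff.bdd_mul hgi.aestronglyMeasurable hC
    have hdiffcond : μ[(fun ω => f (M + 1) ω - f M ω) | ℱ M] =ᵐ[μ] fun _ => (0 : ℝ) := by
      have h1 := condExp_sub (m := ℱ M) (μ := μ) (hmart.integrable (M + 1)) (hmart.integrable M)
      have h2 : μ[f (M + 1) | ℱ M] =ᵐ[μ] f M := hmart.condExp_ae_eq (Nat.le_succ M)
      have h3 : μ[f M | ℱ M] = f M :=
        condExp_of_stronglyMeasurable (ℱ.le M) (hmart.stronglyAdapted M) (hmart.integrable M)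
      have : (fun ω => f (M + 1) ω - f M ω) = f (M + 1) - f M := rfl
      rw [this]
      filter_upwards [h1, h2] with ω h1ω h2ω
      simp only [h1ω, Pi.sub_apply, h2ω, h3, sub_self]
    have hcond : μ[g * (fun ω => f (M + 1) ω - f M ω) | ℱ M] =ᵐ[μ] fun _ => (0 : ℝ) := by
      have hpull := condExp_mul_of_stronglyMeasurable_left hgm hprod hfdiff
      filter_upwards [hpull, hdiffcond] with ω hω h0ω
      simp only [Pi.mul_apply] at hω ⊢
      rw [hω, h0ω, mul_zero]
    calc ∫ ω, g ω * (f (M + 1) ω - f M ω) ∂μ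
        = ∫ ω, (μ[g * (fun ω => f (M + 1) ω - f M ω) | ℱ M]) ω ∂μ :=
          (integral_condExp (ℱ.le M)).symm
      _ = ∫ _ω, (0 : ℝ) ∂μ := integral_congr_ae hcond
      _ = 0 := integral_zero _ _
  -- main induction
  have hmain : ∀ N : ℕ, ∫ ω, Real.exp (∑ k ∈ Finset.Icc 1 N, x k * (f k ω - f (k - 1) ω)) ∂μ
      ≤ Real.exp (∑ k ∈ Finset.Icc 1 N, (x k) ^ 2 / 2) := by
    intro N
    induction N with
    | zero => simp
    | succ M ih =>
      have hsplit : ∀ ω : Ω,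
          Real.exp (∑ k ∈ Finset.Icc 1 (M + 1), x k * (f k ω - f (k - 1) ω))
            = Real.exp (∑ k ∈ Finset.Icc 1 M, x k * (f k ω - f (k - 1) ω))
              * Real.exp (x (M + 1) * (f (M + 1) ω - f M ω)) := by
        intro ω
        rw [Finset.sum_Icc_succ_top (by omega : 1 ≤ M + 1), Real.exp_add]
        norm_num
      have hfdiff : Integrable (fun ω => f (M + 1) ω - f M ω) μ :=
        (hmart.integrable _).sub (hmart.integrable _)
      set G : Ω → ℝ := fun ω => Real.exp (∑ k ∈ Finset.Icc 1 M, x k * (f k ω - f (k - 1) ω))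
        with hG
      have hGd : Integrable (fun ω => G ω * (f (M + 1) ω - f M ω)) μ :=
        hfdiff.bdd_mul ((hgint M).aestronglyMeasurable) (hgbd M)
      have hHint : Integrable (fun ω =>
          G ω * (Real.cosh (x (M + 1)) + (f (M + 1) ω - f M ω) * Real.sinh (x (M + 1)))) μ := by
        refine Integrable.bdd_mul ?_ ((hgint M).aestronglyMeasurable) (hgbd M)
        exact (integrable_const _).add (hfdiff.mul_const _)
      have step1 : ∫ ω, Real.exp (∑ k ∈ Finset.Icc 1 (M + 1), x k * (f k ω - f (k - 1) ω)) ∂μ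
          ≤ ∫ ω, G ω * (Real.cosh (x (M + 1))
              + (f (M + 1) ω - f M ω) * Real.sinh (x (M + 1))) ∂μ := by
        refine integral_mono_ae (hgint (M + 1)) hHint ?_
        filter_upwards [hbdd'] with ω hω
        rw [hsplit ω]
        refine mul_le_mul_of_nonneg_left ?_ (Real.exp_nonneg _)
        have := Real.exp_mul_le_cosh_add_mul_sinh (t := f (M + 1) ω - f M ω)
          (by simpa using hω (M + 1)) (x (M + 1))
        rw [mul_comm] at this
        exact this
      have step2 : ∫ ω, G ω * (Real.cosh (x (M + 1))
            + (f (M + 1) ω - f M ω) * Real.sinh (x (M + 1))) ∂μ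
          = Real.cosh (x (M + 1)) * ∫ ω, G ω ∂μ := by
        have hrw : ∀ ω : Ω, G ω * (Real.cosh (x (M + 1))
              + (f (M + 1) ω - f M ω) * Real.sinh (x (M + 1)))
            = Real.cosh (x (M + 1)) * G ω
              + Real.sinh (x (M + 1)) * (G ω * (f (M + 1) ω - f M ω)) := fun ω => by ring
        simp_rw [hrw]
        rw [integral_add ((hgint M).const_mul _) (hGd.const_mul _),
          integral_const_mul, integral_const_mul,
          hzero M G (Real.exp (∑ k ∈ Finset.Icc 1 M, |x k|)) (hgsm M) (hgint M) (hgbd M),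
          mul_zero, add_zero]
      have step3 : Real.cosh (x (M + 1)) * ∫ ω, G ω ∂μ
          ≤ Real.exp (∑ k ∈ Finset.Icc 1 (M + 1), (x k) ^ 2 / 2) := by
        have h1 : Real.cosh (x (M + 1)) ≤ Real.exp ((x (M + 1)) ^ 2 / 2) :=
          Real.cosh_le_exp_half_sq _
        have h2 : (0:ℝ) ≤ ∫ ω, G ω ∂μ := integral_nonneg fun ω => (Real.exp_pos _).le
        calc Real.cosh (x (M + 1)) * ∫ ω, G ω ∂μ
            ≤ Real.exp ((x (M + 1)) ^ 2 / 2) * Real.exp (∑ k ∈ Finset.Icc 1 M, (x k) ^ 2 / 2) :=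
              mul_le_mul h1 ih h2 (Real.exp_nonneg _)
          _ = Real.exp (∑ k ∈ Finset.Icc 1 (M + 1), (x k) ^ 2 / 2) := by
              rw [← Real.exp_add, Finset.sum_Icc_succ_top (by omega : 1 ≤ M + 1), add_comm]
      exact (step1.trans_eq step2).trans step3
  have hnonneg : 0 ≤ᵐ[μ]
      fun ω => Real.exp (∑ k ∈ Finset.Icc 1 n, x k * (f k ω - f (k - 1) ω)) :=
    Filter.Eventually.of_forall fun ω => (Real.exp_pos _).le
  rw [← MeasureTheory.ofReal_integral_eq_lintegral_ofReal (hgint n) hnonneg]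
  exact ENNReal.ofReal_le_ofReal (hmain n)
end

section
/- Let (zₙ) be an i.i.d. sequence of random variables uniformly distributed on the unit circle 𝕋 ⊂ ℂ. Then for any finitely supported complex sequence (xₙ), E[exp(Re(Σ xₙ zₙ))] ≤ exp(Σ |xₙ|²/2). -/
open MeasureTheory ProbabilityTheory

/-- The normalized arc-length (Haar) measure on the unit circle of `ℂ`,
realized as the image of the normalized Lebesgue measure on `(0, 2π]`
under `t ↦ exp(i t)`. -/
noncomputable def circleHaar : Measure ℂ :=
  Measure.map (fun t : ℝ => Complex.exp (Complex.I * t))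
    ((ENNReal.ofReal (2 * Real.pi))⁻¹ •
      (MeasureTheory.volume.restrict (Set.Ioc (0 : ℝ) (2 * Real.pi))))

open Real in
private lemma steinhaus_re_abs_le (x w : ℂ) (hw : ‖w‖ = 1) :
    |(x * w).re| ≤ ‖x‖ := by
  calc |(x * w).re| ≤ ‖x * w‖ := Complex.abs_re_le_norm _
  _ = ‖x‖ := by rw [norm_mul, hw, mul_one]

open Real in
private lemma steinhaus_periodic (x : ℂ) :
    Function.Periodic (fun t : ℝ => Real.exp ((x * Complex.exp (Complex.I * t)).re)) (2 * π) := by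
  intro t
  simp only
  congr 2
  push_cast
  rw [mul_add, Complex.exp_add, mul_comm (Complex.I) ((2:ℂ)*π), Complex.exp_two_pi_mul_I, mul_one]

open Real in
private lemma steinhaus_circle_int_bound (x : ℂ) :
    ∫ t in (0:ℝ)..(2*π), Real.exp ((x * Complex.exp (Complex.I * t)).re)
      ≤ 2 * π * Real.exp (‖x‖ ^ 2 / 2) := by
  set g : ℝ → ℝ := fun t => Real.exp ((x * Complex.exp (Complex.I * t)).re) with hg
  have hcont : Continuous g := by
    apply Real.continuous_exp.comp
    exact (Complex.continuous_re.comp ((continuous_const.mul ((continuous_const.mul Complex.continuous_ofReal).cexp))))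
  have hshift : (∫ t in (0:ℝ)..(2*π), g (t + π)) = ∫ t in (0:ℝ)..(2*π), g t := by
    rw [intervalIntegral.integral_comp_add_right]
    have := (steinhaus_periodic x).intervalIntegral_add_eq π 0
    simpa [hg, two_mul, add_assoc, add_comm, add_left_comm] using this
  have hneg : ∀ t : ℝ, g (t + π) = Real.exp (-(x * Complex.exp (Complex.I * t)).re) := by
    intro t
    simp only [hg]
    congr 1
    have : Complex.exp (Complex.I * (↑(t + π))) = - Complex.exp (Complex.I * t) := by
      push_cast
      rw [mul_add, Complex.exp_add, mul_comm Complex.I (π:ℂ), Complex.exp_pi_mul_I, mul_neg_one]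
    rw [this, mul_neg, Complex.neg_re]
  have key : (∫ t in (0:ℝ)..(2*π), g t)
      = ∫ t in (0:ℝ)..(2*π), Real.cosh ((x * Complex.exp (Complex.I * t)).re) := by
    have h1 : (∫ t in (0:ℝ)..(2*π), g t)
        = (((∫ t in (0:ℝ)..(2*π), g t) + ∫ t in (0:ℝ)..(2*π), g (t + π))) / 2 := by
      rw [hshift]; ring
    have hI2 : IntervalIntegrable (fun t => g (t + π)) volume 0 (2*π) :=
      Continuous.intervalIntegrable (hcont.comp (continuous_id.add continuous_const) : Continuous fun t : ℝ => g (t + π)) _ _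
    rw [h1, ← intervalIntegral.integral_add (hcont.intervalIntegrable _ _) hI2,
      ← intervalIntegral.integral_div]
    congr 1
    ext t
    rw [hneg t, Real.cosh_eq]
  rw [key]
  calc ∫ t in (0:ℝ)..(2*π), Real.cosh ((x * Complex.exp (Complex.I * t)).re)
      ≤ ∫ t in (0:ℝ)..(2*π), Real.exp (‖x‖ ^ 2 / 2) := by
        apply intervalIntegral.integral_mono_on (by positivity)
        · exact (Real.continuous_cosh.comp (Complex.continuous_re.comp
            ((continuous_const.mul ((continuous_const.mul Complex.continuous_ofReal).cexp))))).intervalIntegrable _ _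
        · exact intervalIntegrable_const
        · intro t _
          have h1 : |(x * Complex.exp (Complex.I * t)).re| ≤ ‖x‖ :=
            steinhaus_re_abs_le x _ (by rw [Complex.norm_exp]; simp [Complex.mul_re, Complex.I_re, Complex.I_im])
          calc Real.cosh ((x * Complex.exp (Complex.I * t)).re)
              ≤ Real.exp (((x * Complex.exp (Complex.I * t)).re) ^ 2 / 2) :=
                Real.cosh_le_exp_half_sq _
            _ ≤ Real.exp (‖x‖ ^ 2 / 2) := by
                apply Real.exp_le_exp.2
                apply div_le_div_of_nonneg_right ?_ (by norm_num)
                · exact sq_le_sq' (by linarith [abs_le.1 h1]) (abs_le.1 h1).2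
    _ = 2 * π * Real.exp (‖x‖ ^ 2 / 2) := by
        rw [intervalIntegral.integral_const, smul_eq_mul, sub_zero]

open Real in
private lemma steinhaus_circleHaar_ae : circleHaar {w : ℂ | ‖w‖ ≠ 1} = 0 := by
  rw [circleHaar, Measure.map_apply (by fun_prop) ?_]
  · convert measure_empty
    · ext t
      simp [Complex.norm_exp, Complex.mul_re, Complex.I_re, Complex.I_im]
    · infer_instance
  · exact (isClosed_eq continuous_norm continuous_const).isOpen_compl.measurableSet

open Real in
private lemma steinhaus_single_bound (x : ℂ) :
    ∫ w, Real.exp ((x * w).re) ∂circleHaar ≤ Real.exp (‖x‖ ^ 2 / 2) := by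
  have hcont : Continuous fun w : ℂ => Real.exp ((x * w).re) := by fun_prop
  rw [circleHaar, integral_map (by fun_prop) hcont.aestronglyMeasurable,
    integral_smul_measure]
  have h2π : (0:ℝ) < 2 * π := by positivity
  have hc : ((ENNReal.ofReal (2 * π))⁻¹).toReal = (2 * π)⁻¹ := by
    rw [ENNReal.toReal_inv, ENNReal.toReal_ofReal h2π.le]
  rw [hc, smul_eq_mul]
  have : ∫ t in Set.Ioc (0:ℝ) (2*π), Real.exp ((x * Complex.exp (Complex.I * t)).re)
      = ∫ t in (0:ℝ)..(2*π), Real.exp ((x * Complex.exp (Complex.I * t)).re) := by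
    rw [intervalIntegral.integral_of_le h2π.le]
  rw [this]
  calc (2*π)⁻¹ * ∫ t in (0:ℝ)..(2*π), Real.exp ((x * Complex.exp (Complex.I * t)).re)
      ≤ (2*π)⁻¹ * (2 * π * Real.exp (‖x‖ ^ 2 / 2)) :=
        mul_le_mul_of_nonneg_left (steinhaus_circle_int_bound x) (by positivity)
    _ = Real.exp (‖x‖ ^ 2 / 2) := by field_simp

theorem steinhaus_subgaussian
    {Ω : Type*} [MeasurableSpace Ω] (μ : Measure Ω) [IsProbabilityMeasure μ]
    (z : ℕ → Ω → ℂ) (hmeas : ∀ n, Measurable (z n))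
    (hind : iIndepFun z μ)
    (hdist : ∀ n, Measure.map (z n) μ = circleHaar) :
    ∀ (F : Finset ℕ) (x : ℕ → ℂ),
      ∫⁻ ω, ENNReal.ofReal (Real.exp ((∑ n ∈ F, x n * z n ω).re)) ∂μ
        ≤ ENNReal.ofReal (Real.exp (∑ n ∈ F, ‖x n‖ ^ 2 / 2)) := by
  intro F x
  classical
  set X : ℕ → Ω → ℝ := fun n ω => (x n * z n ω).re with hX
  have hXmeas : ∀ n, Measurable (X n) := fun n =>
    Complex.measurable_re.comp (measurable_const.mul (hmeas n))
  -- a.e., every z n lies on the unit circle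
  have hcirc : ∀ n, ∀ᵐ ω ∂μ, ‖z n ω‖ = 1 := by
    intro n
    have hms : MeasurableSet {w : ℂ | ‖w‖ ≠ 1} :=
      (isClosed_eq continuous_norm continuous_const).isOpen_compl.measurableSet
    have h0 : μ (z n ⁻¹' {w : ℂ | ‖w‖ ≠ 1}) = 0 := by
      rw [← Measure.map_apply (hmeas n) hms, hdist n, steinhaus_circleHaar_ae]
    filter_upwards [measure_eq_zero_iff_ae_notMem.mp h0] with ω hω
    simpa using hω
  have hcircAll : ∀ᵐ ω ∂μ, ∀ n, ‖z n ω‖ = 1 := ae_all_iff.mpr hcirc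
  have hXbd : ∀ n, ∀ᵐ ω ∂μ, |X n ω| ≤ ‖x n‖ := by
    intro n
    filter_upwards [hcirc n] with ω hω
    exact steinhaus_re_abs_le (x n) _ hω
  -- integrability of exp of each and of the sum
  have hint : ∀ (s : Finset ℕ), Integrable (fun ω => Real.exp (∑ n ∈ s, X n ω)) μ := by
    intro s
    refine ⟨(Measurable.exp (Finset.measurable_sum s fun n _ => hXmeas n)).aestronglyMeasurable, ?_⟩
    apply HasFiniteIntegral.of_bounded (C := Real.exp (∑ n ∈ s, ‖x n‖))
    filter_upwards [hcircAll] with ω hω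
    rw [Real.norm_eq_abs, abs_of_pos (Real.exp_pos _)]
    apply Real.exp_le_exp.2
    exact Finset.sum_le_sum fun n _ =>
      (abs_le.mp (steinhaus_re_abs_le (x n) _ (hω n))).2
  have hintx : ∀ n, Integrable (fun ω => Real.exp (1 * X n ω)) μ := by
    intro n
    simp only [one_mul]
    simpa using hint {n}
  -- independence of the X n
  have hindX : iIndepFun X μ :=
    hind.comp (fun n w => (x n * w).re)
      (fun n => Complex.measurable_re.comp (measurable_const.mul measurable_id))
  -- rewrite LHS as ofReal of an integral
  have hre : ∀ ω, (∑ n ∈ F, x n * z n ω).re = ∑ n ∈ F, X n ω := by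
    intro ω; rw [Complex.re_sum]
  have hL : ∫⁻ ω, ENNReal.ofReal (Real.exp ((∑ n ∈ F, x n * z n ω).re)) ∂μ
      = ENNReal.ofReal (∫ ω, Real.exp (∑ n ∈ F, X n ω) ∂μ) := by
    rw [ofReal_integral_eq_lintegral_ofReal (hint F)
      (Filter.Eventually.of_forall fun ω => (Real.exp_pos _).le)]
    congr 1
    ext ω
    rw [hre ω]
  rw [hL]
  apply ENNReal.ofReal_le_ofReal
  -- mgf factorization
  have hmgf : ∫ ω, Real.exp (∑ n ∈ F, X n ω) ∂μ = ∏ n ∈ F, mgf (X n) μ 1 := by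
    rw [← hindX.mgf_sum hXmeas F]
    simp only [mgf, one_mul, Finset.sum_apply]
  rw [hmgf]
  -- per-factor bound
  have hfac : ∀ n, mgf (X n) μ 1 ≤ Real.exp (‖x n‖ ^ 2 / 2) := by
    intro n
    have hcont : Continuous fun w : ℂ => Real.exp ((x n * w).re) := by fun_prop
    have : mgf (X n) μ 1 = ∫ w, Real.exp ((x n * w).re) ∂circleHaar := by
      rw [mgf, ← hdist n, integral_map (hmeas n).aemeasurable hcont.aestronglyMeasurable]
      simp only [one_mul]
      rfl
    rw [this]
    exact steinhaus_single_bound (x n)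
  calc ∏ n ∈ F, mgf (X n) μ 1
      ≤ ∏ n ∈ F, Real.exp (‖x n‖ ^ 2 / 2) :=
        Finset.prod_le_prod (fun n _ => mgf_nonneg) (fun n _ => hfac n)
    _ = Real.exp (∑ n ∈ F, ‖x n‖ ^ 2 / 2) := (Real.exp_sum F _).symm
end

section
/- If a real random variable f with mean 0 satisfies E[exp(f²)] ≤ e, then f is subgaussian with constant at most (8e)^{1/2}, i.e., E[exp(x f)] ≤ exp(8e·x²/2) for all real x. -/
open MeasureTheory

lemma exp_le_quad {y : ℝ} (h0 : 0 ≤ y) (h1 : y ≤ 1) : Real.exp y ≤ 1 + y + y ^ 2 := by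
  calc Real.exp y ≤ _ := Real.exp_bound' h0 h1 zero_lt_three
    _ ≤ 1 + y + y ^ 2 := by
      erw [Finset.sum_range_succ, Finset.sum_range_succ, Finset.sum_range_succ,
        Finset.sum_range_zero]
      norm_num [Nat.factorial]
      nlinarith

lemma exp_le_add_exp_sq (y : ℝ) : Real.exp y ≤ y + Real.exp (y ^ 2) := by
  have hb : 1 + y ^ 2 ≤ Real.exp (y ^ 2) := by
    have := Real.add_one_le_exp (y ^ 2); linarith
  rcases le_or_gt y 0 with hy | hy
  · -- exp y ≤ 1/(1-y) ≤ y + 1 + y² ≤ y + exp(y²)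
    have h1 : (0:ℝ) < 1 - y := by linarith
    have h2 : Real.exp y ≤ (1 - y)⁻¹ := by
      rw [le_inv_comm₀ (Real.exp_pos _) h1, ← Real.exp_neg]
      have := Real.add_one_le_exp (-y); linarith
    have h3 : (1 - y)⁻¹ ≤ y + (1 + y ^ 2) := by
      rw [inv_le_iff_one_le_mul₀ h1]
      nlinarith
    linarith
  rcases le_or_gt y 1 with hy1 | hy1
  · have := exp_le_quad hy.le hy1
    linarith
  · have : Real.exp y ≤ Real.exp (y ^ 2) := by
      apply Real.exp_le_exp.2; nlinarith
    linarith

theorem psi_two_implies_subgaussian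
    {Ω : Type*} [MeasurableSpace Ω] (μ : Measure Ω) [IsProbabilityMeasure μ]
    (f : Ω → ℝ) (hf : Integrable f μ) (hmean : ∫ ω, f ω ∂μ = 0)
    (hpsi : ∫⁻ ω, ENNReal.ofReal (Real.exp ((f ω) ^ 2)) ∂μ
              ≤ ENNReal.ofReal (Real.exp 1)) :
    ∀ x : ℝ,
      ∫⁻ ω, ENNReal.ofReal (Real.exp (x * f ω)) ∂μ
        ≤ ENNReal.ofReal (Real.exp (8 * Real.exp 1 * x ^ 2 / 2)) := by
  intro x
  have he1 : (2:ℝ) ≤ Real.exp 1 := by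
    have := Real.add_one_le_exp 1; linarith
  have hexpsq_meas : AEStronglyMeasurable (fun ω => Real.exp (f ω ^ 2)) μ :=
    (Real.continuous_exp.comp (continuous_pow 2)).comp_aestronglyMeasurable
      hf.aestronglyMeasurable
  have hint_expsq : Integrable (fun ω => Real.exp (f ω ^ 2)) μ := by
    refine ⟨hexpsq_meas, ?_⟩
    rw [hasFiniteIntegral_iff_ofReal (Filter.Eventually.of_forall
      fun ω => (Real.exp_pos _).le)]
    exact lt_of_le_of_lt hpsi ENNReal.ofReal_lt_top
  have hIle : ∫ ω, Real.exp (f ω ^ 2) ∂μ ≤ Real.exp 1 := by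
    rw [integral_eq_lintegral_of_nonneg_ae
      (Filter.Eventually.of_forall fun ω => (Real.exp_pos _).le) hexpsq_meas]
    exact ENNReal.toReal_le_of_le_ofReal (Real.exp_pos 1).le hpsi
  rcases le_or_gt (x ^ 2) 1 with hx | hx
  · -- small x : exp(x t) ≤ x t + (1 - x²) + x² exp(t²)
    set h : Ω → ℝ := fun ω => x * f ω + ((1 - x ^ 2) + x ^ 2 * Real.exp (f ω ^ 2)) with hh
    have hpt : ∀ ω, Real.exp (x * f ω) ≤ h ω := by
      intro ω
      have h1 : Real.exp (x * f ω) ≤ x * f ω + Real.exp ((x * f ω) ^ 2) :=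
        exp_le_add_exp_sq _
      have h2 : Real.exp ((x * f ω) ^ 2) ≤ (1 - x ^ 2) + x ^ 2 * Real.exp (f ω ^ 2) := by
        have hc := convexOn_exp.2 (Set.mem_univ (f ω ^ 2)) (Set.mem_univ (0:ℝ))
          (sq_nonneg x) (by linarith : (0:ℝ) ≤ 1 - x ^ 2) (by ring)
        simp only [smul_eq_mul, mul_zero, add_zero, Real.exp_zero, mul_one] at hc
        show Real.exp ((x * f ω) ^ 2) ≤ (1 - x ^ 2) + x ^ 2 * Real.exp (f ω ^ 2)
        calc Real.exp ((x * f ω) ^ 2) = Real.exp (x ^ 2 * f ω ^ 2) := by ring_nf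
          _ ≤ x ^ 2 * Real.exp (f ω ^ 2) + (1 - x ^ 2) := hc
          _ = (1 - x ^ 2) + x ^ 2 * Real.exp (f ω ^ 2) := by ring
      show Real.exp (x * f ω) ≤ x * f ω + ((1 - x ^ 2) + x ^ 2 * Real.exp (f ω ^ 2))
      linarith
    have hint2 : Integrable (fun ω => (1 - x ^ 2) + x ^ 2 * Real.exp (f ω ^ 2)) μ := by
      exact (integrable_const _).add (hint_expsq.const_mul _)
    have hint_h : Integrable h μ :=
      (hf.const_mul x).add hint2
    have hnn : 0 ≤ᵐ[μ] h := Filter.Eventually.of_forall fun ω =>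
      le_trans (Real.exp_pos _).le (hpt ω)
    calc ∫⁻ ω, ENNReal.ofReal (Real.exp (x * f ω)) ∂μ
        ≤ ∫⁻ ω, ENNReal.ofReal (h ω) ∂μ :=
          lintegral_mono fun ω => ENNReal.ofReal_le_ofReal (hpt ω)
      _ = ENNReal.ofReal (∫ ω, h ω ∂μ) :=
          (ofReal_integral_eq_lintegral_ofReal hint_h hnn).symm
      _ ≤ ENNReal.ofReal (Real.exp (8 * Real.exp 1 * x ^ 2 / 2)) := by
          apply ENNReal.ofReal_le_ofReal
          have hih : ∫ ω, h ω ∂μ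
              = x * ∫ ω, f ω ∂μ + ((1 - x ^ 2) * (μ Set.univ).toReal
                + x ^ 2 * ∫ ω, Real.exp (f ω ^ 2) ∂μ) := by
            rw [hh]
            rw [integral_add (hf.const_mul x) hint2,
              integral_add (integrable_const _) (hint_expsq.const_mul _),
              integral_const_mul, integral_const_mul, integral_const, measureReal_def, smul_eq_mul,
              mul_comm (1 - x ^ 2)]
          rw [hih, hmean, measure_univ] at *
          simp only [mul_zero, zero_add, ENNReal.toReal_one, mul_one]
          have hbound : (1 - x ^ 2) + x ^ 2 * ∫ ω, Real.exp (f ω ^ 2) ∂μ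
              ≤ 1 + x ^ 2 * (Real.exp 1 - 1) := by nlinarith [sq_nonneg x]
          have hexp : 1 + x ^ 2 * (Real.exp 1 - 1) ≤ Real.exp (8 * Real.exp 1 * x ^ 2 / 2) := by
            have h2 := Real.add_one_le_exp (8 * Real.exp 1 * x ^ 2 / 2)
            nlinarith [sq_nonneg x]
          linarith
  · -- large x : exp(x t) ≤ exp(x²/4) * exp(t²)
    have hpt : ∀ ω, Real.exp (x * f ω) ≤ Real.exp (x ^ 2 / 4) * Real.exp (f ω ^ 2) := by
      intro ω
      rw [← Real.exp_add]
      apply Real.exp_le_exp.2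
      nlinarith [sq_nonneg (x / 2 - f ω)]
    calc ∫⁻ ω, ENNReal.ofReal (Real.exp (x * f ω)) ∂μ
        ≤ ∫⁻ ω, ENNReal.ofReal (Real.exp (x ^ 2 / 4)) *
            ENNReal.ofReal (Real.exp (f ω ^ 2)) ∂μ := by
          apply lintegral_mono fun ω => ?_
          rw [← ENNReal.ofReal_mul (Real.exp_pos _).le]
          exact ENNReal.ofReal_le_ofReal (hpt ω)
      _ = ENNReal.ofReal (Real.exp (x ^ 2 / 4)) *
            ∫⁻ ω, ENNReal.ofReal (Real.exp (f ω ^ 2)) ∂μ :=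
          lintegral_const_mul' _ _ ENNReal.ofReal_ne_top
      _ ≤ ENNReal.ofReal (Real.exp (x ^ 2 / 4)) * ENNReal.ofReal (Real.exp 1) :=
          mul_le_mul_right hpsi _
      _ ≤ ENNReal.ofReal (Real.exp (8 * Real.exp 1 * x ^ 2 / 2)) := by
          rw [← ENNReal.ofReal_mul (Real.exp_pos _).le, ← Real.exp_add]
          apply ENNReal.ofReal_le_ofReal
          apply Real.exp_le_exp.2
          nlinarith
end

section
/- If a real random variable f is subgaussian with constant 1 (i.e., E[exp(xf)] ≤ exp(x²/2) for all real x), then E[exp((f/c)²)] ≤ e for c = (2(e+1)/(e-1))^{1/2}. -/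
open MeasureTheory Real

lemma gauss_integrable (y : ℝ) :
    Integrable (fun t : ℝ => Real.exp (y * t - t ^ 2 / 2)) := by
  have h : (fun t : ℝ => Real.exp (y * t - t ^ 2 / 2))
      = fun t : ℝ => Real.exp (y ^ 2 / 2) * Real.exp (-(1/2 : ℝ) * (t - y) ^ 2) := by
    funext t
    rw [← Real.exp_add]
    ring_nf
  rw [h]
  exact ((integrable_exp_neg_mul_sq (by norm_num : (0:ℝ) < 1/2)).comp_sub_right y).const_mul _

lemma gauss_repr (y : ℝ) :
    ENNReal.ofReal (Real.exp (y ^ 2 / 2))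
      = ∫⁻ t : ℝ, ENNReal.ofReal
          ((Real.sqrt (2 * π))⁻¹ * Real.exp (y * t - t ^ 2 / 2)) := by
  have hint : ∫ t : ℝ, Real.exp (y * t - t ^ 2 / 2)
      = Real.exp (y ^ 2 / 2) * Real.sqrt (2 * π) := by
    have h : (fun t : ℝ => Real.exp (y * t - t ^ 2 / 2))
        = fun t : ℝ => Real.exp (y ^ 2 / 2) * Real.exp (-(1/2 : ℝ) * (t - y) ^ 2) := by
      funext t; rw [← Real.exp_add]; ring_nf
    rw [h, integral_const_mul,
      integral_sub_right_eq_self (fun t : ℝ => Real.exp (-(1/2 : ℝ) * t ^ 2)) y,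
      integral_gaussian]
    congr 1
    rw [show π / (1/2 : ℝ) = 2 * π by ring]
  rw [← ofReal_integral_eq_lintegral_ofReal
      ((gauss_integrable y).const_mul _)
      (Filter.Eventually.of_forall fun t => by positivity),
    integral_const_mul, hint]
  congr 1
  field_simp

theorem subgaussian_implies_psi_two
    {Ω : Type*} [MeasurableSpace Ω] (μ : Measure Ω) [IsProbabilityMeasure μ]
    (f : Ω → ℝ) (hf : Measurable f)
    (hsub : ∀ x : ℝ,
      ∫⁻ ω, ENNReal.ofReal (Real.exp (x * f ω)) ∂μ
        ≤ ENNReal.ofReal (Real.exp (x ^ 2 / 2))) :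
    ∫⁻ ω, ENNReal.ofReal
        (Real.exp ((f ω / Real.sqrt (2 * (Real.exp 1 + 1) / (Real.exp 1 - 1))) ^ 2)) ∂μ
      ≤ ENNReal.ofReal (Real.exp 1) := by
  have he2 : (2:ℝ) ≤ Real.exp 1 := by have := Real.add_one_le_exp (1:ℝ); linarith
  set a : ℝ := (Real.exp 1 - 1) / (2 * (Real.exp 1 + 1)) with ha_def
  have ha : 0 < a := div_pos (by linarith) (by linarith)
  have hbe : (1/2 : ℝ) - a = 1 / (Real.exp 1 + 1) := by
    rw [ha_def]; field_simp; norm_num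
  have hb : (0:ℝ) < 1/2 - a := by rw [hbe]; positivity
  set k : ℝ := (Real.sqrt (2 * π))⁻¹ with hk_def
  have hk : 0 < k := by positivity
  have hpt : ∀ ω, (f ω / Real.sqrt (2 * (Real.exp 1 + 1) / (Real.exp 1 - 1))) ^ 2
      = (Real.sqrt (2*a) * f ω) ^ 2 / 2 := by
    intro ω
    rw [div_pow, mul_pow, Real.sq_sqrt (by positivity : (0:ℝ) ≤ 2*a),
      Real.sq_sqrt (div_nonneg (by linarith) (by linarith))]
    rw [ha_def]
    field_simp
  have hmeas : AEMeasurable (Function.uncurry fun ω t =>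
      ENNReal.ofReal (k * Real.exp (Real.sqrt (2*a) * f ω * t - t ^ 2 / 2)))
      (μ.prod volume) := by
    apply Measurable.aemeasurable
    apply ENNReal.measurable_ofReal.comp
    apply Measurable.const_mul
    apply Real.measurable_exp.comp
    fun_prop
  calc ∫⁻ ω, ENNReal.ofReal
        (Real.exp ((f ω / Real.sqrt (2 * (Real.exp 1 + 1) / (Real.exp 1 - 1))) ^ 2)) ∂μ
      = ∫⁻ ω, ENNReal.ofReal (Real.exp ((Real.sqrt (2*a) * f ω) ^ 2 / 2)) ∂μ :=
        lintegral_congr fun ω => by rw [hpt ω]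
    _ = ∫⁻ ω, ∫⁻ t, ENNReal.ofReal
          (k * Real.exp (Real.sqrt (2*a) * f ω * t - t ^ 2 / 2)) ∂volume ∂μ :=
        lintegral_congr fun ω => gauss_repr _
    _ = ∫⁻ t, ∫⁻ ω, ENNReal.ofReal
          (k * Real.exp (Real.sqrt (2*a) * f ω * t - t ^ 2 / 2)) ∂μ ∂volume :=
        lintegral_lintegral_swap hmeas
    _ ≤ ∫⁻ t, ENNReal.ofReal (k * Real.exp (-(1/2 - a) * t ^ 2)) ∂volume := by
        apply lintegral_mono
        intro t
        have h1 : ∀ ω, k * Real.exp (Real.sqrt (2*a) * f ω * t - t ^ 2 / 2)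
            = (k * Real.exp (-(t ^ 2) / 2)) * Real.exp ((Real.sqrt (2*a) * t) * f ω) := by
          intro ω
          conv_rhs => rw [mul_assoc, ← Real.exp_add]
          ring_nf
        simp_rw [h1]
        rw [show (fun ω => ENNReal.ofReal ((k * Real.exp (-(t ^ 2) / 2)) *
              Real.exp ((Real.sqrt (2*a) * t) * f ω)))
            = fun ω => ENNReal.ofReal (k * Real.exp (-(t ^ 2) / 2)) *
              ENNReal.ofReal (Real.exp ((Real.sqrt (2*a) * t) * f ω)) from
            funext fun ω => ENNReal.ofReal_mul (by positivity),
          lintegral_const_mul' _ _ ENNReal.ofReal_ne_top]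
        calc ENNReal.ofReal (k * Real.exp (-(t ^ 2) / 2)) *
              ∫⁻ ω, ENNReal.ofReal (Real.exp ((Real.sqrt (2*a) * t) * f ω)) ∂μ
            ≤ ENNReal.ofReal (k * Real.exp (-(t ^ 2) / 2)) *
              ENNReal.ofReal (Real.exp ((Real.sqrt (2*a) * t) ^ 2 / 2)) :=
              mul_le_mul_right (hsub _) _
          _ = ENNReal.ofReal (k * Real.exp (-(1/2 - a) * t ^ 2)) := by
              rw [← ENNReal.ofReal_mul (by positivity)]
              congr 1
              rw [mul_pow, Real.sq_sqrt (by positivity : (0:ℝ) ≤ 2*a),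
                mul_assoc, ← Real.exp_add]
              ring_nf
    _ = ENNReal.ofReal (k * Real.sqrt (π / (1/2 - a))) := by
        rw [← ofReal_integral_eq_lintegral_ofReal
            ((integrable_exp_neg_mul_sq hb).const_mul k)
            (Filter.Eventually.of_forall fun t => by positivity),
          integral_const_mul, integral_gaussian]
    _ ≤ ENNReal.ofReal (Real.exp 1) := by
        apply ENNReal.ofReal_le_ofReal
        have h2 : k * Real.sqrt (π / (1/2 - a)) = Real.sqrt ((Real.exp 1 + 1) / 2) := by
          rw [hk_def, ← Real.sqrt_inv, ← Real.sqrt_mul (by positivity), hbe]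
          congr 1
          have hπ : (0:ℝ) < π := Real.pi_pos
          field_simp
        rw [h2]
        have h3 : (Real.exp 1 + 1) / 2 ≤ (Real.exp 1) ^ 2 := by nlinarith
        calc Real.sqrt ((Real.exp 1 + 1) / 2) ≤ Real.sqrt ((Real.exp 1) ^ 2) :=
              Real.sqrt_le_sqrt h3
          _ = Real.exp 1 := Real.sqrt_sq (Real.exp_pos 1).le
end

section
/- Fix a > 0. Let (fₙ) be i.i.d. copies of f with E[sup_{n≥1} (log(n+1))^{-1/a} |fₙ|] ≤ 1. Then E[exp(|f/2|^a)] ≤ e, i.e., ‖f‖_{ψ_a} ≤ 2. -/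
open MeasureTheory ProbabilityTheory ENNReal

theorem sup_log_bound_implies_psi_a
    (a : ℝ) (ha : 0 < a)
    {Ω : Type*} [MeasurableSpace Ω] (μ : Measure Ω) [IsProbabilityMeasure μ]
    (f : ℕ → Ω → ℝ) (hmeas : ∀ n, Measurable (f n))
    (hind : iIndepFun f μ)
    (hid : ∀ n, Measure.map (f n) μ = Measure.map (f 0) μ)
    (hsup : ∫⁻ ω, ⨆ n : ℕ,
        ENNReal.ofReal ((Real.log (n + 2)) ^ (-(1 / a)) * |f n ω|) ∂μ ≤ 1) :
    ∫⁻ ω, ENNReal.ofReal (Real.exp (|f 0 ω / 2| ^ a)) ∂μ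
      ≤ ENNReal.ofReal (Real.exp 1) := by
  -- notation
  set t : ℕ → ℝ := fun n => 2 * (Real.log (n + 2)) ^ (1 / a) with ht
  have hlog : ∀ n : ℕ, 0 < Real.log ((n : ℝ) + 2) := by
    intro n
    apply Real.log_pos
    have : (0:ℝ) ≤ (n:ℝ) := Nat.cast_nonneg n
    linarith
  have hLpos : ∀ n : ℕ, 0 < (Real.log ((n:ℝ) + 2)) ^ (1 / a) :=
    fun n => Real.rpow_pos_of_pos (hlog n) _
  -- the events
  set A : ℕ → Set Ω := fun n => {ω | |f n ω| ≤ t n} with hA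
  have hAmeas : ∀ n, MeasurableSet (A n) := by
    intro n
    exact measurableSet_le (hmeas n).abs measurable_const
  -- Step 1 : μ (⋂ n, A n) ≥ 1/2
  set Z : Ω → ℝ≥0∞ := fun ω => ⨆ n : ℕ,
      ENNReal.ofReal ((Real.log (n + 2)) ^ (-(1 / a)) * |f n ω|) with hZ
  have hZmeas : Measurable Z := by
    apply Measurable.iSup
    intro n
    exact ((hmeas n).abs.const_mul _).ennreal_ofReal
  have hsubset : (⋂ n, A n)ᶜ ⊆ {ω | (2:ℝ≥0∞) ≤ Z ω} := by
    intro ω hω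
    simp only [Set.compl_iInter, Set.mem_iUnion, Set.mem_compl_iff, hA, Set.mem_setOf_eq,
      not_le] at hω
    obtain ⟨n, hn⟩ := hω
    have hneg : (Real.log ((n:ℝ) + 2)) ^ (-(1 / a)) = ((Real.log ((n:ℝ) + 2)) ^ (1/a))⁻¹ := by
      rw [Real.rpow_neg (hlog n).le]
    have h2 : (2:ℝ) ≤ (Real.log ((n:ℝ) + 2)) ^ (-(1 / a)) * |f n ω| := by
      rw [hneg]
      rw [le_inv_mul_iff₀ (hLpos n)]
      calc (Real.log ((n:ℝ)+2)) ^ (1/a) * 2 = t n := by ring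
        _ ≤ |f n ω| := hn.le
    calc (2:ℝ≥0∞) = ENNReal.ofReal 2 := by simp
      _ ≤ ENNReal.ofReal ((Real.log ((n:ℝ) + 2)) ^ (-(1 / a)) * |f n ω|) :=
          ENNReal.ofReal_le_ofReal h2
      _ ≤ Z ω := le_iSup (fun n : ℕ => ENNReal.ofReal
          ((Real.log ((n:ℝ) + 2)) ^ (-(1 / a)) * |f n ω|)) n
  have hmarkov : μ {ω | (2:ℝ≥0∞) ≤ Z ω} ≤ 2⁻¹ := by
    have h := mul_meas_ge_le_lintegral₀ (μ := μ) hZmeas.aemeasurable (2:ℝ≥0∞)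
    have h2 : (2:ℝ≥0∞) * μ {ω | (2:ℝ≥0∞) ≤ Z ω} ≤ 1 := h.trans hsup
    rw [mul_comm] at h2
    exact ENNReal.le_inv_iff_mul_le.2 h2
  have hcompl : μ ((⋂ n, A n)ᶜ) ≤ 2⁻¹ := le_trans (measure_mono hsubset) hmarkov
  have hInter : (2:ℝ≥0∞)⁻¹ ≤ μ (⋂ n, A n) := by
    have h1 : μ (⋂ n, A n) = 1 - μ ((⋂ n, A n)ᶜ) := by
      rw [measure_compl (MeasurableSet.iInter hAmeas) (measure_ne_top _ _)]
      rw [measure_univ]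
      rw [ENNReal.sub_sub_cancel one_ne_top (prob_le_one)]
    rw [h1]
    calc (2:ℝ≥0∞)⁻¹ = 1 - 2⁻¹ := ENNReal.one_sub_inv_two.symm
      _ ≤ 1 - μ ((⋂ n, A n)ᶜ) := tsub_le_tsub_left hcompl 1
  -- Step 2: finite products
  have hprod : ∀ N : ℕ, (2:ℝ≥0∞)⁻¹ ≤ ∏ n ∈ Finset.range N, μ (A n) := by
    intro N
    have hmeasb : ∀ n ∈ Finset.range N,
        MeasurableSet[MeasurableSpace.comap (f n) inferInstance] (A n) := by
      intro n _
      exact ⟨{x : ℝ | |x| ≤ t n}, measurableSet_le measurable_abs measurable_const, rfl⟩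
    have := hind.meas_biInter hmeasb
    calc (2:ℝ≥0∞)⁻¹ ≤ μ (⋂ n, A n) := hInter
      _ ≤ μ (⋂ n ∈ Finset.range N, A n) := by
          apply measure_mono
          exact fun ω hω => Set.mem_iInter₂.2 fun n _ => Set.mem_iInter.1 hω n
      _ = ∏ n ∈ Finset.range N, μ (A n) := this
  -- Step 3: identical distribution
  set p : ℕ → ℝ≥0∞ := fun n => μ {ω | t n < |f 0 ω|} with hp
  have hmeasS : ∀ n : ℕ, MeasurableSet {x : ℝ | |x| ≤ t n} :=
    fun n => measurableSet_le measurable_abs measurable_const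
  have hid' : ∀ n, μ (A n) = μ {ω | |f 0 ω| ≤ t n} := by
    intro n
    have h1 : A n = f n ⁻¹' {x : ℝ | |x| ≤ t n} := rfl
    have h2 : {ω | |f 0 ω| ≤ t n} = f 0 ⁻¹' {x : ℝ | |x| ≤ t n} := rfl
    rw [h1, h2, ← Measure.map_apply (hmeas n) (hmeasS n),
      ← Measure.map_apply (hmeas 0) (hmeasS n), hid n]
  have hcomplA : ∀ n, μ (A n) = 1 - p n := by
    intro n
    rw [hid' n]
    have : {ω | |f 0 ω| ≤ t n} = {ω | t n < |f 0 ω|}ᶜ := by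
      ext ω; simp [not_lt]
    rw [this, measure_compl (measurableSet_lt measurable_const (hmeas 0).abs)
      (measure_ne_top _ _), measure_univ]
  -- Step 4: sum bound
  have hp_le_one : ∀ n, p n ≤ 1 := fun n => prob_le_one
  set pr : ℕ → ℝ := fun n => (p n).toReal with hpr
  have hpr_nonneg : ∀ n, 0 ≤ pr n := fun n => ENNReal.toReal_nonneg
  have hprodr : ∀ N : ℕ, (2:ℝ)⁻¹ ≤ ∏ n ∈ Finset.range N, (1 - pr n) := by
    intro N
    have h := hprod N
    have h1 : ∀ n, μ (A n) = ENNReal.ofReal (1 - pr n) := by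
      intro n
      rw [hcomplA n, hpr, ENNReal.ofReal_sub _ ENNReal.toReal_nonneg, ENNReal.ofReal_one,
        ENNReal.ofReal_toReal (measure_ne_top _ _)]
    have hnn : ∀ n : ℕ, (0:ℝ) ≤ 1 - pr n := by
      intro n
      have : pr n ≤ 1 := by
        rw [hpr]
        simpa using ENNReal.toReal_mono one_ne_top (hp_le_one n)
      linarith
    have h2 : ∏ n ∈ Finset.range N, μ (A n)
        = ENNReal.ofReal (∏ n ∈ Finset.range N, (1 - pr n)) := by
      rw [ENNReal.ofReal_prod_of_nonneg (fun n _ => hnn n)]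
      exact Finset.prod_congr rfl fun n _ => h1 n
    rw [h2] at h
    have := (ENNReal.ofReal_le_ofReal_iff (Finset.prod_nonneg fun n _ => hnn n)).1 (le_trans (le_of_eq (by
      rw [ENNReal.ofReal_inv_of_pos two_pos, ENNReal.ofReal_ofNat])) h)
    linarith [this]
  have hprle : ∀ n : ℕ, pr n ≤ 1 := by
    intro n
    rw [hpr]
    simpa using ENNReal.toReal_mono one_ne_top (hp_le_one n)
  have hprpos : ∀ n : ℕ, 0 < 1 - pr n := by
    intro n
    rcases lt_or_eq_of_le (by linarith [hprle n] : (0:ℝ) ≤ 1 - pr n) with h | h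
    · exact h
    · exfalso
      have h2 := hprodr (n + 1)
      have hz : ∏ m ∈ Finset.range (n+1), (1 - pr m) = 0 :=
        Finset.prod_eq_zero (Finset.self_mem_range_succ n) h.symm
      rw [hz] at h2
      norm_num at h2
  have hsumr : ∀ N : ℕ, ∑ n ∈ Finset.range N, pr n ≤ Real.log 2 := by
    intro N
    have h1 : ∀ n : ℕ, pr n ≤ -Real.log (1 - pr n) := by
      intro n
      have h := Real.add_one_le_exp (-pr n)
      have h2 := (Real.log_le_iff_le_exp (hprpos n)).2 (by linarith)
      linarith
    calc ∑ n ∈ Finset.range N, pr n ≤ ∑ n ∈ Finset.range N, -Real.log (1 - pr n) :=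
          Finset.sum_le_sum fun n _ => h1 n
      _ = -Real.log (∏ n ∈ Finset.range N, (1 - pr n)) := by
          rw [Real.log_prod fun n _ => (hprpos n).ne', Finset.sum_neg_distrib]
      _ ≤ -Real.log (2:ℝ)⁻¹ := by
          have := Real.log_le_log (by norm_num) (hprodr N)
          linarith
      _ = Real.log 2 := by rw [Real.log_inv]; ring
  have htsum : ∑' n : ℕ, p n ≤ ENNReal.ofReal (Real.log 2) := by
    apply ENNReal.tsum_le_of_sum_range_le
    intro N
    have h1 : ∑ n ∈ Finset.range N, p n
        = ENNReal.ofReal (∑ n ∈ Finset.range N, pr n) := by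
      rw [ENNReal.ofReal_sum_of_nonneg fun n _ => hpr_nonneg n]
      exact Finset.sum_congr rfl fun n _ => (ENNReal.ofReal_toReal (measure_ne_top _ _)).symm
    rw [h1]
    exact ENNReal.ofReal_le_ofReal (hsumr N)
  -- Step 5: layer cake
  set G : Ω → ℝ := fun ω => Real.exp (|f 0 ω / 2| ^ a) with hGdef
  have hGmeas : Measurable G :=
    Real.measurable_exp.comp ((Real.continuous_rpow_const ha.le).measurable.comp
      ((hmeas 0).div_const 2).abs)
  have key : ∫⁻ ω, ENNReal.ofReal (G ω) ∂μ = ∫⁻ s in Set.Ioi (0:ℝ), μ {ω | s < G ω} :=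
    lintegral_eq_lintegral_meas_lt μ (ae_of_all _ fun ω => (Real.exp_pos _).le)
      hGmeas.aemeasurable
  have hsplit : ∫⁻ s in Set.Ioi (0:ℝ), μ {ω | s < G ω}
      ≤ (∫⁻ s in Set.Ioc (0:ℝ) 2, μ {ω | s < G ω})
        + ∫⁻ s in Set.Ioi (2:ℝ), μ {ω | s < G ω} := by
    rw [← Set.Ioc_union_Ioi_eq_Ioi (by norm_num : (0:ℝ) ≤ 2)]
    exact lintegral_union_le _ _ _
  have h1 : ∫⁻ s in Set.Ioc (0:ℝ) 2, μ {ω | s < G ω} ≤ 2 := by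
    calc ∫⁻ s in Set.Ioc (0:ℝ) 2, μ {ω | s < G ω}
        ≤ ∫⁻ _ in Set.Ioc (0:ℝ) 2, 1 :=
          setLIntegral_mono measurable_const fun s _ => prob_le_one
      _ = 2 := by rw [setLIntegral_const, Real.volume_Ioc]; norm_num
  have hcover : Set.Ioi (2:ℝ) ⊆ ⋃ n : ℕ, Set.Ioc ((n:ℝ)+2) ((n:ℝ)+3) := by
    intro s hs
    simp only [Set.mem_Ioi] at hs
    rcases le_or_gt s 3 with h3 | h3
    · exact Set.mem_iUnion.2 ⟨0, by constructor <;> simp <;> linarith⟩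
    · refine Set.mem_iUnion.2 ⟨⌈s⌉₊ - 3, ?_⟩
      have hs0 : (0:ℝ) ≤ s := by linarith
      have hc : (3:ℕ) ≤ ⌈s⌉₊ := by
        have h4 := Nat.lt_ceil.mpr (show ((3:ℕ):ℝ) < s by push_cast; linarith)
        omega
      have hcast : ((⌈s⌉₊ - 3 : ℕ) : ℝ) = (⌈s⌉₊ : ℝ) - 3 := by
        push_cast [hc]; ring
      have hceil1 := Nat.ceil_lt_add_one hs0
      have hceil2 := Nat.le_ceil s
      constructor
      · rw [hcast]; linarith
      · rw [hcast]; linarith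
  have hevent : ∀ n : ℕ, {ω | (n:ℝ)+2 < G ω} = {ω | t n < |f 0 ω|} := by
    intro n
    ext ω
    have hx : (0:ℝ) ≤ |f 0 ω / 2| := abs_nonneg _
    simp only [Set.mem_setOf_eq, hGdef]
    rw [← Real.log_lt_iff_lt_exp (by positivity : (0:ℝ) < (n:ℝ)+2)]
    rw [← Real.rpow_inv_lt_iff_of_pos (hlog n).le hx ha]
    rw [ht, abs_div, abs_two, lt_div_iff₀ (by norm_num : (0:ℝ) < 2), one_div]
    constructor <;> intro h <;> linarith
  have h2 : ∫⁻ s in Set.Ioi (2:ℝ), μ {ω | s < G ω} ≤ ∑' n : ℕ, p n := by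
    calc ∫⁻ s in Set.Ioi (2:ℝ), μ {ω | s < G ω}
        ≤ ∫⁻ s in ⋃ n : ℕ, Set.Ioc ((n:ℝ)+2) ((n:ℝ)+3), μ {ω | s < G ω} :=
          lintegral_mono_set hcover
      _ ≤ ∑' n : ℕ, ∫⁻ s in Set.Ioc ((n:ℝ)+2) ((n:ℝ)+3), μ {ω | s < G ω} :=
          lintegral_iUnion_le _ _
      _ ≤ ∑' n : ℕ, p n := by
          apply ENNReal.tsum_le_tsum
          intro n
          calc ∫⁻ s in Set.Ioc ((n:ℝ)+2) ((n:ℝ)+3), μ {ω | s < G ω}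
              ≤ ∫⁻ _ in Set.Ioc ((n:ℝ)+2) ((n:ℝ)+3), μ {ω | (n:ℝ)+2 < G ω} :=
                setLIntegral_mono measurable_const fun s hs =>
                  measure_mono fun ω hω => lt_trans hs.1 hω
            _ = μ {ω | (n:ℝ)+2 < G ω} * volume (Set.Ioc ((n:ℝ)+2) ((n:ℝ)+3)) :=
                setLIntegral_const _ _
            _ = μ {ω | (n:ℝ)+2 < G ω} := by rw [Real.volume_Ioc]; norm_num
            _ = p n := by rw [hevent n, hp]
  calc ∫⁻ ω, ENNReal.ofReal (Real.exp (|f 0 ω / 2| ^ a)) ∂μ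
      = ∫⁻ s in Set.Ioi (0:ℝ), μ {ω | s < G ω} := key
    _ ≤ 2 + ENNReal.ofReal (Real.log 2) :=
        hsplit.trans (add_le_add h1 (h2.trans htsum))
    _ ≤ ENNReal.ofReal (Real.exp 1) := by
        rw [show (2:ℝ≥0∞) = ENNReal.ofReal 2 by simp,
          ← ENNReal.ofReal_add (by norm_num) (Real.log_nonneg one_le_two)]
        apply ENNReal.ofReal_le_ofReal
        have hl := Real.log_two_lt_d9
        have he := Real.exp_one_gt_d9
        norm_num at hl he ⊢
        linarith
end

section
/- Let (f₁,...,fₙ) be complex random variables on a probability space (T,m) such that for all complex (x₁,...,xₙ), E[exp(Re(Σ xₖ fₖ))] ≤ exp(s² Σ|xₖ|²/2). Assume ‖fₖ‖₂ = 1 and ‖fₖ‖_∞ ≤ C for all k. Then for any 0 < δ < 1/C there is a finite subset 𝒯 ⊂ T with log|𝒯| ≥ n(1 - δC)²/(2s²C²) such that (Σₖ |fₖ(x) - fₖ(y)|²)^{1/2} > δ√n for all distinct x, y ∈ 𝒯. -/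
open MeasureTheory

private lemma sqrt_le_affine {x c : ℝ} (hx : 0 ≤ x) (hc : 0 < c) :
    Real.sqrt x ≤ Real.sqrt c + (x - c) / (2 * Real.sqrt c) := by
  have hsc : 0 < Real.sqrt c := Real.sqrt_pos.mpr hc
  have h1 : Real.sqrt x ^ 2 = x := Real.sq_sqrt hx
  have h2 : Real.sqrt c ^ 2 = c := Real.sq_sqrt hc.le
  rw [show Real.sqrt c + (x - c) / (2 * Real.sqrt c)
      = (2 * Real.sqrt c * Real.sqrt c + (x - c)) / (2 * Real.sqrt c) by
    field_simp, le_div_iff₀ (by positivity)]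
  nlinarith [sq_nonneg (Real.sqrt x - Real.sqrt c)]

private lemma sum_mul_le_sqrt {n : ℕ} (a b : Fin n → ℝ) (ha : ∀ k, 0 ≤ a k)
    (hb : ∀ k, 0 ≤ b k) :
    ∑ k, a k * b k ≤ Real.sqrt (∑ k, a k ^ 2) * Real.sqrt (∑ k, b k ^ 2) := by
  have h := Finset.sum_mul_sq_le_sq_mul_sq Finset.univ a b
  have h0 : 0 ≤ ∑ k, a k * b k :=
    Finset.sum_nonneg fun k _ => mul_nonneg (ha k) (hb k)
  calc ∑ k, a k * b k = Real.sqrt ((∑ k, a k * b k) ^ 2) := (Real.sqrt_sq h0).symm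
    _ ≤ Real.sqrt ((∑ k, a k ^ 2) * ∑ k, b k ^ 2) := Real.sqrt_le_sqrt h
    _ = _ := Real.sqrt_mul (Finset.sum_nonneg fun k _ => sq_nonneg _) _

private lemma key_inner {n : ℕ} (a b : Fin n → ℂ) {r : ℝ} (hr : 0 ≤ r)
    (hab : ∑ k, ‖a k - b k‖ ^ 2 ≤ r ^ 2) :
    (∑ k, ‖b k‖ ^ 2) - r * Real.sqrt (∑ k, ‖b k‖ ^ 2)
      ≤ ∑ k, ((starRingEnd ℂ) (a k) * b k).re := by
  have hS0 : 0 ≤ ∑ k, ‖b k‖ ^ 2 :=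
    Finset.sum_nonneg fun k _ => sq_nonneg _
  have e1 : ∀ k, ((starRingEnd ℂ) (a k) * b k).re
      = ‖b k‖ ^ 2 + ((starRingEnd ℂ) (a k - b k) * b k).re := by
    intro k
    have hz : (starRingEnd ℂ) (a k) * b k
        = b k * (starRingEnd ℂ) (b k) + (starRingEnd ℂ) (a k - b k) * b k := by
      rw [map_sub]; ring
    rw [hz, Complex.add_re, Complex.mul_conj, Complex.ofReal_re, Complex.normSq_eq_norm_sq]
  have e2 : ∑ k, ((starRingEnd ℂ) (a k) * b k).re
      = (∑ k, ‖b k‖ ^ 2) + ∑ k, ((starRingEnd ℂ) (a k - b k) * b k).re := by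
    simp_rw [e1]; rw [Finset.sum_add_distrib]
  have h3 : |∑ k, ((starRingEnd ℂ) (a k - b k) * b k).re|
      ≤ r * Real.sqrt (∑ k, ‖b k‖ ^ 2) := by
    calc |∑ k, ((starRingEnd ℂ) (a k - b k) * b k).re|
        ≤ ∑ k, |((starRingEnd ℂ) (a k - b k) * b k).re| :=
          Finset.abs_sum_le_sum_abs _ _
      _ ≤ ∑ k, ‖a k - b k‖ * ‖b k‖ := by
          refine Finset.sum_le_sum fun k _ => ?_
          calc |((starRingEnd ℂ) (a k - b k) * b k).re|
              ≤ ‖(starRingEnd ℂ) (a k - b k) * b k‖ :=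
                Complex.abs_re_le_norm _
            _ = ‖a k - b k‖ * ‖b k‖ := by
                rw [norm_mul, Complex.norm_conj]
      _ ≤ Real.sqrt (∑ k, ‖a k - b k‖ ^ 2)
            * Real.sqrt (∑ k, ‖b k‖ ^ 2) :=
          sum_mul_le_sqrt _ _ (fun k => norm_nonneg _)
            (fun k => norm_nonneg _)
      _ ≤ r * Real.sqrt (∑ k, ‖b k‖ ^ 2) := by
          gcongr
          calc Real.sqrt (∑ k, ‖a k - b k‖ ^ 2)
              ≤ Real.sqrt (r ^ 2) := Real.sqrt_le_sqrt hab
            _ = r := Real.sqrt_sq hr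
  have h4 := neg_abs_le (∑ k, ((starRingEnd ℂ) (a k - b k) * b k).re)
  rw [e2]; linarith

private lemma integrable_of_bound {T : Type*} [MeasurableSpace T] (m : Measure T)
    [IsFiniteMeasure m] {g : T → ℝ} (hg : AEStronglyMeasurable g m) {B : ℝ}
    (hB : ∀ᵐ t ∂m, |g t| ≤ B) : Integrable g m :=
  Integrable.mono' (integrable_const B) hg
    (by filter_upwards [hB] with t ht; simpa [Real.norm_eq_abs] using ht)

private lemma exp_integral_le {T : Type*} [MeasurableSpace T] (m : Measure T)
    [IsProbabilityMeasure m] {h : T → ℝ} (hint : Integrable h m)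
    (hexp : Integrable (fun t => Real.exp (h t)) m) :
    Real.exp (∫ t, h t ∂m) ≤ ∫ t, Real.exp (h t) ∂m := by
  set c := ∫ t, h t ∂m with hc
  have h1 : ∀ᵐ t ∂m, Real.exp c * (h t - c + 1) ≤ Real.exp (h t) := by
    refine ae_of_all _ fun t => ?_
    have h2 : Real.exp c * ((h t - c) + 1) ≤ Real.exp c * Real.exp (h t - c) :=
      mul_le_mul_of_nonneg_left (Real.add_one_le_exp _) (Real.exp_pos c).le
    rw [← Real.exp_add] at h2
    calc Real.exp c * (h t - c + 1) ≤ Real.exp (c + (h t - c)) := h2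
      _ = Real.exp (h t) := by ring_nf
  have hint2 : Integrable (fun t => Real.exp c * (h t - c + 1)) m :=
    (((hint.sub (integrable_const c)).add (integrable_const 1)).const_mul _)
  have h3 : ∫ t, Real.exp c * (h t - c + 1) ∂m ≤ ∫ t, Real.exp (h t) ∂m :=
    integral_mono_ae hint2 hexp h1
  have h4 : ∫ t, Real.exp c * (h t - c + 1) ∂m = Real.exp c := by
    have i1 : Integrable (fun t => h t - c) m := hint.sub (integrable_const c)
    rw [integral_const_mul, integral_add i1 (integrable_const 1),
      integral_sub hint (integrable_const c), integral_const, integral_const]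
    simp [← hc]
  linarith

set_option maxHeartbeats 2000000 in
theorem subgaussian_separated_set
    {T : Type*} [MeasurableSpace T] (m : Measure T) [IsProbabilityMeasure m]
    (n : ℕ) (f : Fin n → T → ℂ) (hmeas : ∀ k, Measurable (f k))
    (s : ℝ) (hs : 0 < s)
    (hsub : ∀ x : Fin n → ℂ,
      ∫⁻ t, ENNReal.ofReal (Real.exp ((∑ k, x k * f k t).re)) ∂m
        ≤ ENNReal.ofReal (Real.exp (s ^ 2 * (∑ k, ‖x k‖ ^ 2) / 2)))
    (hnorm : ∀ k, ∫⁻ t, ENNReal.ofReal (‖f k t‖ ^ 2) ∂m = 1)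
    (C : ℝ) (hC : 0 < C) (hbound : ∀ k, ∀ᵐ t ∂m, ‖f k t‖ ≤ C)
    (δ : ℝ) (hδ : 0 < δ) (hδC : δ < 1 / C) :
    ∃ 𝒯 : Finset T,
      (n : ℝ) * (1 - δ * C) ^ 2 / (2 * s ^ 2 * C ^ 2) ≤ Real.log 𝒯.card ∧
      ∀ x ∈ 𝒯, ∀ y ∈ 𝒯, x ≠ y →
        δ * Real.sqrt n < Real.sqrt (∑ k, ‖f k x - f k y‖ ^ 2) := by
  classical
  have hTne : Nonempty T := by
    by_contra hT
    rw [not_nonempty_iff] at hT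
    have h1 : (Set.univ : Set T) = ∅ := Set.univ_eq_empty_iff.mpr hT
    have h2 := measure_univ (μ := m)
    rw [h1, measure_empty] at h2
    exact zero_ne_one h2
  rcases Nat.eq_zero_or_pos n with hn | hn
  · obtain ⟨t₀⟩ := hTne
    refine ⟨{t₀}, by simp [hn], ?_⟩
    intro x hx y hy hxy
    simp only [Finset.mem_singleton] at hx hy
    exact absurd (hx.trans hy.symm) hxy
  -- main case
  have hn0 : (0:ℝ) < n := by exact_mod_cast hn
  set G : Set T := {t | ∀ k, ‖f k t‖ ≤ C} with hGdef
  have hG : ∀ᵐ t ∂m, t ∈ G := ae_all_iff.mpr hbound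
  have hC1 : 1 ≤ C := by
    by_contra hlt
    push_neg at hlt
    set k0 : Fin n := ⟨0, hn⟩
    have h1 : ∫⁻ t, ENNReal.ofReal (‖f k0 t‖ ^ 2) ∂m
        ≤ ENNReal.ofReal (C ^ 2) := by
      calc ∫⁻ t, ENNReal.ofReal (‖f k0 t‖ ^ 2) ∂m
          ≤ ∫⁻ _, ENNReal.ofReal (C ^ 2) ∂m := by
            refine lintegral_mono_ae ?_
            filter_upwards [hbound k0] with t ht
            exact ENNReal.ofReal_le_ofReal
              (by nlinarith [norm_nonneg (f k0 t)])
        _ = ENNReal.ofReal (C ^ 2) := by simp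
    rw [hnorm k0] at h1
    have h2 : (1:ℝ) ≤ C ^ 2 := ENNReal.one_le_ofReal.mp h1
    nlinarith
  have hδ1 : δ < 1 := lt_of_lt_of_le hδC (by rw [div_le_one hC]; exact hC1)
  have hδC1 : δ * C < 1 := (lt_div_iff₀ hC).mp hδC
  set lam : ℝ := (1 - δ) / (s ^ 2 * C ^ 2) with hlamdef
  have hlam : 0 < lam := by
    apply div_pos (by linarith)
    positivity
  set F : T → ℝ := fun t => ∑ k, ‖f k t‖ ^ 2 with hFdef
  have hFnonneg : ∀ t, 0 ≤ F t := fun t => Finset.sum_nonneg fun k _ => sq_nonneg _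
  have hfkmeas : ∀ k : Fin n, Measurable fun t => ‖f k t‖ ^ 2 := fun k =>
    ((continuous_norm.measurable.comp (hmeas k)).pow_const 2)
  have hFmeas : Measurable F := Finset.measurable_sum _ fun k _ => hfkmeas k
  have hint_fk : ∀ k, Integrable (fun t => ‖f k t‖ ^ 2) m := by
    intro k
    refine integrable_of_bound m (hfkmeas k).aestronglyMeasurable (B := C ^ 2) ?_
    filter_upwards [hbound k] with t ht
    rw [abs_of_nonneg (sq_nonneg _)]
    nlinarith [norm_nonneg (f k t)]
  have hFk : ∀ k, ∫ t, ‖f k t‖ ^ 2 ∂m = 1 := by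
    intro k
    rw [integral_eq_lintegral_of_nonneg_ae (ae_of_all _ fun t => sq_nonneg _)
      (hfkmeas k).aestronglyMeasurable, hnorm k]
    simp
  have hFint : Integrable F m := integrable_finset_sum _ fun k _ => hint_fk k
  have hFval : ∫ t, F t ∂m = n := by
    rw [hFdef]
    rw [integral_finset_sum _ fun k _ => hint_fk k]
    simp [hFk]
  have hFbound : ∀ᵐ t ∂m, F t ≤ C ^ 2 * n := by
    filter_upwards [hG] with t ht
    calc F t ≤ ∑ _k : Fin n, C ^ 2 :=
        Finset.sum_le_sum fun k _ => by nlinarith [norm_nonneg (f k t), ht k]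
      _ = C ^ 2 * n := by simp [mul_comm]
  have hsqmeas : Measurable fun t => Real.sqrt (F t) :=
    Real.continuous_sqrt.measurable.comp hFmeas
  have hsqint : Integrable (fun t => Real.sqrt (F t)) m := by
    refine integrable_of_bound m hsqmeas.aestronglyMeasurable (B := C * Real.sqrt n) ?_
    filter_upwards [hFbound] with t ht
    rw [abs_of_nonneg (Real.sqrt_nonneg _)]
    calc Real.sqrt (F t) ≤ Real.sqrt (C ^ 2 * n) := Real.sqrt_le_sqrt ht
      _ = C * Real.sqrt n := by
          rw [Real.sqrt_mul (sq_nonneg C), Real.sqrt_sq hC.le]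
  have hsqle : ∫ t, Real.sqrt (F t) ∂m ≤ Real.sqrt n := by
    have hint2 : Integrable (fun t => Real.sqrt n + (F t - n) / (2 * Real.sqrt n)) m :=
      (integrable_const _).add ((hFint.sub (integrable_const _)).div_const _)
    calc ∫ t, Real.sqrt (F t) ∂m
        ≤ ∫ t, (Real.sqrt n + (F t - n) / (2 * Real.sqrt n)) ∂m :=
          integral_mono_ae hsqint hint2
            (ae_of_all _ fun t => sqrt_le_affine (hFnonneg t) hn0)
      _ = Real.sqrt n := by
          have i1 : Integrable (fun t => F t - (n:ℝ)) m := hFint.sub (integrable_const _)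
          rw [integral_add (integrable_const _) (i1.div_const _),
            integral_const, integral_div,
            integral_sub hFint (integrable_const _), integral_const, hFval]
          simp
  -- h and its integral
  set h : T → ℝ := fun t => lam * (F t - δ * Real.sqrt n * Real.sqrt (F t)) with hhdef
  have hhmeas : Measurable h := by
    apply Measurable.const_mul
    exact hFmeas.sub (hsqmeas.const_mul _)
  have hhint : Integrable h m :=
    ((hFint.sub (hsqint.const_mul _)).const_mul _)
  have hcint : lam * ((n:ℝ) * (1 - δ)) ≤ ∫ t, h t ∂m := by
    have : ∫ t, h t ∂m
        = lam * ((∫ t, F t ∂m) - δ * Real.sqrt n * ∫ t, Real.sqrt (F t) ∂m) := by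
      rw [hhdef]
      rw [integral_const_mul, integral_sub hFint (hsqint.const_mul _), integral_const_mul]
    rw [this, hFval]
    have hsq : δ * Real.sqrt n * ∫ t, Real.sqrt (F t) ∂m
        ≤ δ * Real.sqrt n * Real.sqrt n := by
      apply mul_le_mul_of_nonneg_left hsqle (by positivity)
    have hss : Real.sqrt n * Real.sqrt n = (n:ℝ) := Real.mul_self_sqrt hn0.le
    apply mul_le_mul_of_nonneg_left _ hlam.le
    nlinarith
  have hexpint : Integrable (fun t => Real.exp (h t)) m := by
    refine integrable_of_bound m (Real.measurable_exp.comp hhmeas).aestronglyMeasurable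
      (B := Real.exp (lam * (C ^ 2 * n))) ?_
    filter_upwards [hFbound] with t ht
    rw [abs_of_nonneg (Real.exp_pos _).le, Real.exp_le_exp]
    have h1 : 0 ≤ δ * Real.sqrt n * Real.sqrt (F t) := by positivity
    have : h t ≤ lam * F t := by
      rw [hhdef]
      apply mul_le_mul_of_nonneg_left _ hlam.le
      linarith
    calc h t ≤ lam * F t := this
      _ ≤ lam * (C ^ 2 * n) := mul_le_mul_of_nonneg_left ht hlam.le
  -- the inner products
  set g : T → T → ℝ := fun u t => ∑ k, ((starRingEnd ℂ) (f k u) * f k t).re with hgdef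
  have hgmeas : ∀ u, Measurable (g u) := fun u =>
    Finset.measurable_sum _ fun k _ =>
      Complex.measurable_re.comp (measurable_const.mul (hmeas k))
  have habs_term : ∀ u t, u ∈ G → t ∈ G → ∀ k : Fin n,
      ((starRingEnd ℂ) (f k u) * f k t).re ≤ C ^ 2 := by
    intro u t hu ht k
    have h1 : ((starRingEnd ℂ) (f k u) * f k t).re
        ≤ ‖(starRingEnd ℂ) (f k u) * f k t‖ :=
      le_trans (le_abs_self _) (Complex.abs_re_le_norm _)
    rw [norm_mul, Complex.norm_conj] at h1
    nlinarith [norm_nonneg (f k u), norm_nonneg (f k t), hu k, ht k]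
  have hgbound : ∀ u, u ∈ G → ∀ᵐ t ∂m, g u t ≤ C ^ 2 * n := by
    intro u hu
    filter_upwards [hG] with t ht
    calc g u t ≤ ∑ _k : Fin n, C ^ 2 :=
        Finset.sum_le_sum fun k _ => habs_term u t hu ht k
      _ = C ^ 2 * n := by simp [mul_comm]
  have hgu_int : ∀ u, u ∈ G → Integrable (fun t => Real.exp (lam * g u t)) m := by
    intro u hu
    refine integrable_of_bound m
      (Real.measurable_exp.comp ((hgmeas u).const_mul _)).aestronglyMeasurable
      (B := Real.exp (lam * (C ^ 2 * n))) ?_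
    filter_upwards [hgbound u hu] with t ht
    rw [abs_of_nonneg (Real.exp_pos _).le, Real.exp_le_exp]
    exact mul_le_mul_of_nonneg_left ht hlam.le
  set E : ℝ := s ^ 2 * lam ^ 2 * C ^ 2 * n / 2 with hEdef
  have hcenter : ∀ u, u ∈ G → ∫ t, Real.exp (lam * g u t) ∂m ≤ Real.exp E := by
    intro u hu
    set x : Fin n → ℂ := fun k => (lam : ℂ) * (starRingEnd ℂ) (f k u) with hxdef
    have hre : ∀ t, (∑ k, x k * f k t).re = lam * g u t := by
      intro t
      rw [Complex.re_sum, hgdef, Finset.mul_sum]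
      refine Finset.sum_congr rfl fun k _ => ?_
      rw [hxdef, mul_assoc, Complex.re_ofReal_mul]
    have habs : (∑ k, ‖x k‖ ^ 2) = lam ^ 2 * ∑ k, ‖f k u‖ ^ 2 := by
      rw [Finset.mul_sum]
      refine Finset.sum_congr rfl fun k _ => ?_
      rw [hxdef, norm_mul, Complex.norm_conj, Complex.norm_real, Real.norm_eq_abs, abs_of_nonneg hlam.le]
      ring
    have hx2 : s ^ 2 * (∑ k, ‖x k‖ ^ 2) / 2 ≤ E := by
      rw [habs, hEdef]
      have : (∑ k, ‖f k u‖ ^ 2) ≤ C ^ 2 * n := by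
        calc (∑ k, ‖f k u‖ ^ 2) ≤ ∑ _k : Fin n, C ^ 2 :=
            Finset.sum_le_sum fun k _ => by
              nlinarith [norm_nonneg (f k u), hu k]
          _ = C ^ 2 * n := by simp [mul_comm]
      calc s ^ 2 * (lam ^ 2 * ∑ k, ‖f k u‖ ^ 2) / 2
          ≤ s ^ 2 * (lam ^ 2 * (C ^ 2 * n)) / 2 := by gcongr
        _ = s ^ 2 * lam ^ 2 * C ^ 2 * n / 2 := by ring
    have hsu := hsub x
    have hl : ∫⁻ t, ENNReal.ofReal (Real.exp (lam * g u t)) ∂m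
        ≤ ENNReal.ofReal (Real.exp E) := by
      calc ∫⁻ t, ENNReal.ofReal (Real.exp (lam * g u t)) ∂m
          = ∫⁻ t, ENNReal.ofReal (Real.exp ((∑ k, x k * f k t).re)) ∂m := by
            refine lintegral_congr fun t => ?_
            rw [hre]
        _ ≤ ENNReal.ofReal (Real.exp (s ^ 2 * (∑ k, ‖x k‖ ^ 2) / 2)) := hsu
        _ ≤ ENNReal.ofReal (Real.exp E) :=
            ENNReal.ofReal_le_ofReal (Real.exp_le_exp.mpr hx2)
    rw [integral_eq_lintegral_of_nonneg_ae (ae_of_all _ fun t => (Real.exp_pos _).le)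
      (Real.measurable_exp.comp ((hgmeas u).const_mul _)).aestronglyMeasurable]
    calc (∫⁻ t, ENNReal.ofReal (Real.exp (lam * g u t)) ∂m).toReal
        ≤ (ENNReal.ofReal (Real.exp E)).toReal :=
          ENNReal.toReal_mono ENNReal.ofReal_ne_top hl
      _ = Real.exp E := ENNReal.toReal_ofReal (Real.exp_pos _).le
  -- core counting lemma
  have core : ∀ 𝒯 : Finset T, (∀ u ∈ 𝒯, u ∈ G) →
      (∀ t ∈ G, ∃ u ∈ 𝒯, Real.sqrt (∑ k, ‖f k t - f k u‖ ^ 2)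
        ≤ δ * Real.sqrt n) →
      Real.exp ((n:ℝ) * (1 - δ) ^ 2 / (2 * s ^ 2 * C ^ 2)) ≤ 𝒯.card := by
    intro 𝒯 h𝒯G hcov
    have hptwise : ∀ᵐ t ∂m, Real.exp (h t) ≤ ∑ u ∈ 𝒯, Real.exp (lam * g u t) := by
      filter_upwards [hG] with t ht
      obtain ⟨u, hu𝒯, hclose⟩ := hcov t ht
      have hS0 : 0 ≤ ∑ k, ‖f k t - f k u‖ ^ 2 :=
        Finset.sum_nonneg fun k _ => sq_nonneg _
      have hS : ∑ k, ‖f k u - f k t‖ ^ 2 ≤ (δ * Real.sqrt n) ^ 2 := by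
        have heq : ∑ k, ‖f k u - f k t‖ ^ 2
            = ∑ k, ‖f k t - f k u‖ ^ 2 := by
          refine Finset.sum_congr rfl fun k _ => ?_
          rw [norm_sub_rev]
        rw [heq]
        have h2 := pow_le_pow_left₀ (Real.sqrt_nonneg
          (∑ k, ‖f k t - f k u‖ ^ 2)) hclose 2
        rwa [Real.sq_sqrt hS0] at h2
      have hkey := key_inner (fun k => f k u) (fun k => f k t)
        (by positivity : (0:ℝ) ≤ δ * Real.sqrt n) hS
      have h1 : h t ≤ lam * g u t := by
        rw [hhdef, hgdef]
        exact mul_le_mul_of_nonneg_left hkey hlam.le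
      calc Real.exp (h t) ≤ Real.exp (lam * g u t) := Real.exp_le_exp.mpr h1
        _ ≤ ∑ u ∈ 𝒯, Real.exp (lam * g u t) :=
            Finset.single_le_sum (f := fun u => Real.exp (lam * g u t))
              (fun i _ => (Real.exp_pos _).le) hu𝒯
    have chain : Real.exp (lam * ((n:ℝ) * (1 - δ))) ≤ 𝒯.card * Real.exp E := by
      calc Real.exp (lam * ((n:ℝ) * (1 - δ)))
          ≤ Real.exp (∫ t, h t ∂m) := Real.exp_le_exp.mpr hcint
        _ ≤ ∫ t, Real.exp (h t) ∂m := exp_integral_le m hhint hexpint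
        _ ≤ ∫ t, ∑ u ∈ 𝒯, Real.exp (lam * g u t) ∂m :=
            integral_mono_ae hexpint
              (integrable_finset_sum _ fun u hu => hgu_int u (h𝒯G u hu)) hptwise
        _ = ∑ u ∈ 𝒯, ∫ t, Real.exp (lam * g u t) ∂m :=
            integral_finset_sum _ fun u hu => hgu_int u (h𝒯G u hu)
        _ ≤ ∑ _u ∈ 𝒯, Real.exp E :=
            Finset.sum_le_sum fun u hu => hcenter u (h𝒯G u hu)
        _ = 𝒯.card * Real.exp E := by rw [Finset.sum_const, nsmul_eq_mul]
    have hexp : Real.exp ((n:ℝ) * (1 - δ) ^ 2 / (2 * s ^ 2 * C ^ 2))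
        = Real.exp (lam * ((n:ℝ) * (1 - δ))) / Real.exp E := by
      rw [← Real.exp_sub]
      congr 1
      have hs' : s ≠ 0 := ne_of_gt hs
      have hC' : C ≠ 0 := ne_of_gt hC
      rw [hEdef, hlamdef]
      field_simp
      ring
    rw [hexp, div_le_iff₀ (Real.exp_pos _)]
    exact chain
  -- comparing exponents
  have hKK' : (n : ℝ) * (1 - δ * C) ^ 2 / (2 * s ^ 2 * C ^ 2)
      ≤ (n : ℝ) * (1 - δ) ^ 2 / (2 * s ^ 2 * C ^ 2) := by
    apply div_le_div_of_nonneg_right ?_ (by positivity)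
    apply mul_le_mul_of_nonneg_left _ hn0.le
    have h1 : 0 ≤ 1 - δ * C := by linarith
    have h2 : 1 - δ * C ≤ 1 - δ := by nlinarith
    nlinarith
  -- the separation predicate and the family of admissible finsets
  set S : Set ℕ := {c : ℕ | ∃ 𝒯 : Finset T, ((∀ u ∈ 𝒯, u ∈ G) ∧
    ∀ x ∈ 𝒯, ∀ y ∈ 𝒯, x ≠ y →
      δ * Real.sqrt n < Real.sqrt (∑ k, ‖f k x - f k y‖ ^ 2)) ∧
    𝒯.card = c} with hSdef
  have hfromcard : ∀ 𝒯 : Finset T,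
      (∀ x ∈ 𝒯, ∀ y ∈ 𝒯, x ≠ y →
        δ * Real.sqrt n < Real.sqrt (∑ k, ‖f k x - f k y‖ ^ 2)) →
      Real.exp ((n:ℝ) * (1 - δ) ^ 2 / (2 * s ^ 2 * C ^ 2)) ≤ 𝒯.card →
      ∃ 𝒯' : Finset T,
        (n : ℝ) * (1 - δ * C) ^ 2 / (2 * s ^ 2 * C ^ 2) ≤ Real.log 𝒯'.card ∧
        ∀ x ∈ 𝒯', ∀ y ∈ 𝒯', x ≠ y →
          δ * Real.sqrt n < Real.sqrt (∑ k, ‖f k x - f k y‖ ^ 2) := by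
    intro 𝒯 hsep hcard
    refine ⟨𝒯, ?_, hsep⟩
    have hpos : (0:ℝ) < 𝒯.card := lt_of_lt_of_le (Real.exp_pos _) hcard
    rw [Real.le_log_iff_exp_le hpos]
    exact le_trans (Real.exp_le_exp.mpr hKK') hcard
  by_cases hbdd : BddAbove S
  · have hne : S.Nonempty := ⟨0, ∅, ⟨by simp, by simp⟩, by simp⟩
    obtain ⟨𝒯, ⟨h𝒯G, h𝒯sep⟩, hcard⟩ := Nat.sSup_mem hne hbdd
    have hmax : ∀ t ∈ G, ∃ u ∈ 𝒯,
        Real.sqrt (∑ k, ‖f k t - f k u‖ ^ 2) ≤ δ * Real.sqrt n := by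
      intro t ht
      by_contra hno
      push_neg at hno
      have ht𝒯 : t ∉ 𝒯 := by
        intro hmem
        have h0 := hno t hmem
        have hz : (∑ k, ‖f k t - f k t‖ ^ 2) = 0 := by simp
        rw [hz, Real.sqrt_zero] at h0
        exact absurd h0 (not_lt.mpr (by positivity))
      have hP' : (insert t 𝒯).card ∈ S := by
        refine ⟨insert t 𝒯, ⟨?_, ?_⟩, rfl⟩
        · intro u hu
          rcases Finset.mem_insert.mp hu with rfl | hu
          · exact ht
          · exact h𝒯G u hu
        · intro x hx y hy hxy
          have hsymm : ∀ a b : T,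
              δ * Real.sqrt n < Real.sqrt (∑ k, ‖f k a - f k b‖ ^ 2) →
              δ * Real.sqrt n < Real.sqrt (∑ k, ‖f k b - f k a‖ ^ 2) := by
            intro a b hab
            have : ∑ k, ‖f k b - f k a‖ ^ 2
                = ∑ k, ‖f k a - f k b‖ ^ 2 := by
              refine Finset.sum_congr rfl fun k _ => ?_
              rw [norm_sub_rev]
            rw [this]; exact hab
          rcases Finset.mem_insert.mp hx with hxt | hxm
          · rcases Finset.mem_insert.mp hy with hyt | hym
            · exact absurd (hxt.trans hyt.symm) hxy
            · rw [hxt]; exact hno y hym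
          · rcases Finset.mem_insert.mp hy with hyt | hym
            · rw [hyt]; exact hsymm _ _ (hno x hxm)
            · exact h𝒯sep x hxm y hym hxy
      have hle := le_csSup hbdd hP'
      rw [Finset.card_insert_of_notMem ht𝒯, hcard] at hle
      omega
    exact hfromcard 𝒯 h𝒯sep (core 𝒯 h𝒯G hmax)
  · rw [not_bddAbove_iff] at hbdd
    obtain ⟨c, ⟨𝒯, ⟨h𝒯G, h𝒯sep⟩, hcard⟩, hc⟩ :=
      hbdd ⌈Real.exp ((n:ℝ) * (1 - δ) ^ 2 / (2 * s ^ 2 * C ^ 2))⌉₊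
    refine hfromcard 𝒯 h𝒯sep ?_
    calc Real.exp ((n:ℝ) * (1 - δ) ^ 2 / (2 * s ^ 2 * C ^ 2))
        ≤ (⌈Real.exp ((n:ℝ) * (1 - δ) ^ 2 / (2 * s ^ 2 * C ^ 2))⌉₊ : ℝ) := Nat.le_ceil _
      _ ≤ 𝒯.card := by exact_mod_cast (hcard ▸ hc.le)
end

section
/- Let G be a finite abelian group and let f₁,...,fₙ be n distinct characters of G forming a subgaussian system with constant s (i.e., E[exp(Re(Σ xₖ fₖ))] ≤ exp(s² Σ|xₖ|²/2) for all complex xₖ, where E is the average over G). Then for any 0 < δ < 1, log|G| ≥ n(1-δ)²/(2s²). -/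
theorem subgaussian_characters_card_bound
    (G : Type*) [CommGroup G] [Fintype G]
    (n : ℕ) (f : Fin n → G →* ℂ) (hinj : Function.Injective f)
    (s : ℝ) (hs : 0 < s)
    (hsub : ∀ x : Fin n → ℂ,
      (Fintype.card G : ℝ)⁻¹ * ∑ g : G, Real.exp ((∑ k, x k * f k g).re)
        ≤ Real.exp (s ^ 2 * (∑ k, ‖x k‖ ^ 2) / 2)) :
    ∀ δ : ℝ, 0 < δ → δ < 1 →
      (n : ℝ) * (1 - δ) ^ 2 / (2 * s ^ 2) ≤ Real.log (Fintype.card G) := by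
  intro δ hδ0 hδ1
  have hs2 : (0:ℝ) < s ^ 2 := by positivity
  have hG : (0:ℝ) < (Fintype.card G : ℝ) := by exact_mod_cast Fintype.card_pos
  set t : ℝ := 1 / s ^ 2 with ht
  have ht0 : 0 < t := by positivity
  have key := hsub (fun _ => (t : ℂ))
  have hRHS : s ^ 2 * (∑ _k : Fin n, ‖((t:ℂ))‖ ^ 2) / 2
      = (n : ℝ) / (2 * s ^ 2) := by
    rw [Finset.sum_const]
    simp [Complex.norm_real, Real.norm_eq_abs, abs_of_pos ht0, ht]
    field_simp
  have hterm : (∑ k : Fin n, (t:ℂ) * f k 1).re = n * t := by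
    simp [Finset.sum_const]
  have hsum_ge : Real.exp ((n:ℝ) * t)
      ≤ ∑ g : G, Real.exp ((∑ k, (t:ℂ) * f k g).re) := by
    have := Finset.single_le_sum
      (f := fun g : G => Real.exp ((∑ k, (t:ℂ) * f k g).re))
      (fun g _ => (Real.exp_pos _).le) (Finset.mem_univ (1 : G))
    simpa only [hterm] using this
  have key2 : (Fintype.card G : ℝ)⁻¹ * Real.exp ((n:ℝ) * t)
      ≤ Real.exp ((n:ℝ) / (2 * s ^ 2)) := by
    calc (Fintype.card G : ℝ)⁻¹ * Real.exp ((n:ℝ) * t)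
        ≤ (Fintype.card G : ℝ)⁻¹ * ∑ g : G, Real.exp ((∑ k, (t:ℂ) * f k g).re) := by
          exact mul_le_mul_of_nonneg_left hsum_ge (by positivity)
      _ ≤ Real.exp (s ^ 2 * (∑ _k : Fin n, ‖((t:ℂ))‖ ^ 2) / 2) := key
      _ = Real.exp ((n : ℝ) / (2 * s ^ 2)) := by rw [hRHS]
  have hcard : Real.exp ((n:ℝ) / (2 * s ^ 2)) ≤ (Fintype.card G : ℝ) := by
    have h1 : Real.exp ((n:ℝ) * t) ≤ (Fintype.card G : ℝ) * Real.exp ((n:ℝ) / (2 * s ^ 2)) := by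
      rw [inv_mul_le_iff₀ hG] at key2
      linarith [key2]
    have h2 : (n:ℝ) * t = (n:ℝ) / (2 * s ^ 2) + (n:ℝ) / (2 * s ^ 2) := by
      rw [ht]; field_simp; ring
    rw [h2, Real.exp_add] at h1
    have := (Real.exp_pos ((n:ℝ) / (2 * s ^ 2)))
    calc Real.exp ((n:ℝ) / (2 * s ^ 2))
        = Real.exp ((n:ℝ) / (2 * s ^ 2)) * Real.exp ((n:ℝ) / (2 * s ^ 2))
          / Real.exp ((n:ℝ) / (2 * s ^ 2)) := by field_simp
      _ ≤ (Fintype.card G : ℝ) := by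
          rw [div_le_iff₀ this]
          nlinarith
  have hlog : (n:ℝ) / (2 * s ^ 2) ≤ Real.log (Fintype.card G) :=
    (Real.le_log_iff_exp_le hG).mpr hcard
  have hfactor : (n : ℝ) * (1 - δ) ^ 2 / (2 * s ^ 2) ≤ (n:ℝ) / (2 * s ^ 2) := by
    have h1 : (1 - δ) ^ 2 ≤ 1 := by nlinarith
    have h2 : (n:ℝ) * (1 - δ) ^ 2 ≤ (n:ℝ) * 1 :=
      mul_le_mul_of_nonneg_left h1 (Nat.cast_nonneg n)
    apply div_le_div_of_nonneg_right _ (by positivity) |>.trans_eq rfl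
    linarith
  linarith
end

section
/- Let k < m < n be integers and let N(k,m,n) be the maximal cardinality of a family 𝒯 of m-element subsets of {1,...,n} with pairwise intersections of size at most k. Let A ⊂ ℤ with |A| = n, and let R(A) be the set of ξ ∈ {-1,0,1}^A with Σ_{a∈A} ξ_a·a = 0. If |R(A)| < N(k,m,n), then A contains a quasi-independent subset B with |B| ≥ m - k. -/
/-- A finite set `B ⊆ ℤ` is quasi-independent if the only relation
`∑_{b ∈ B} ξ_b · b = 0` with coefficients `ξ_b ∈ {-1, 0, 1}` is the trivial one. -/
def QuasiIndependent (B : Finset ℤ) : Prop :=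
  ∀ ξ : ℤ → ℤ, (∀ b, ξ b ∈ ({-1, 0, 1} : Set ℤ)) →
    ∑ b ∈ B, ξ b * b = 0 → ∀ b ∈ B, ξ b = 0

/-- The set of relations with coefficients in `{-1,0,1}` supported on `A`. -/
def Relations (A : Finset ℤ) : Set (ℤ → ℤ) :=
  {ξ | (∀ a, ξ a ∈ ({-1, 0, 1} : Set ℤ)) ∧ (∀ a, a ∉ A → ξ a = 0) ∧
    ∑ a ∈ A, ξ a * a = 0}

/-- `constantWeightCodeBound k m n` is `N(k,m,n)`: the maximal cardinality of a
family of `m`-element subsets of `{1,…,n}` with pairwise intersections of size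
at most `k`. -/
noncomputable def constantWeightCodeBound (k m n : ℕ) : ℕ :=
  sSup {c : ℕ | ∃ 𝒯 : Finset (Finset (Fin n)), 𝒯.card = c ∧
    (∀ t ∈ 𝒯, t.card = m) ∧
    ∀ s ∈ 𝒯, ∀ t ∈ 𝒯, s ≠ t → (s ∩ t).card ≤ k}

lemma relations_finite (A : Finset ℤ) : (Relations A).Finite := by
  classical
  have hsub : Relations A ⊆
      (fun PN : Finset ℤ × Finset ℤ => fun a =>
        (if a ∈ PN.1 then (1 : ℤ) else 0) - (if a ∈ PN.2 then 1 else 0)) ''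
        ((A.powerset ×ˢ A.powerset : Finset (Finset ℤ × Finset ℤ)) : Set _) := by
    rintro ξ ⟨hval, hsupp, -⟩
    refine ⟨(A.filter (fun a => ξ a = 1), A.filter (fun a => ξ a = -1)), ?_, ?_⟩
    · simp only [Finset.mem_coe, Finset.mem_product, Finset.mem_powerset]
      exact ⟨Finset.filter_subset _ _, Finset.filter_subset _ _⟩
    · funext a
      by_cases hA : a ∈ A
      · rcases hval a with h | h | h <;>
          simp_all [Finset.mem_filter]
      · simp [Finset.mem_filter, hA, hsupp a hA]
  exact Set.Finite.subset (Set.Finite.image _ (Finset.finite_toSet _)) hsub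

theorem few_relations_implies_quasiindependent_subset
    (k m n : ℕ) (hkm : k < m) (hmn : m < n)
    (A : Finset ℤ) (hA : A.card = n)
    (hR : (Relations A).ncard < constantWeightCodeBound k m n) :
    ∃ B ⊆ A, QuasiIndependent B ∧ m - k ≤ B.card := by
  classical
  have hfin : (Relations A).Finite := relations_finite A
  -- The sup defining N is attained.
  set Sset := {c : ℕ | ∃ 𝒯 : Finset (Finset (Fin n)), 𝒯.card = c ∧
    (∀ t ∈ 𝒯, t.card = m) ∧
    ∀ s ∈ 𝒯, ∀ t ∈ 𝒯, s ≠ t → (s ∩ t).card ≤ k} with hSset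
  have hbdd : BddAbove Sset := by
    refine ⟨Fintype.card (Finset (Fin n)), ?_⟩
    rintro c ⟨𝒯, h1, -⟩
    exact h1 ▸ (Finset.card_le_univ 𝒯).trans_eq (Finset.card_univ)
  have hne : Sset.Nonempty := ⟨0, ∅, by simp⟩
  have hNmem : constantWeightCodeBound k m n ∈ Sset := Nat.sSup_mem hne hbdd
  obtain ⟨𝒯, h𝒯card, h𝒯m, h𝒯pair⟩ := hNmem
  -- transport Fin n into A
  have e : A ≃ Fin n := A.equivFinOfCardEq hA
  set f : Fin n → ℤ := fun i => ((e.symm i : A) : ℤ) with hf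
  have hfinj : Function.Injective f := by
    intro i j hij
    exact e.symm.injective (Subtype.ext hij)
  have hfmem : ∀ i, f i ∈ A := fun i => (e.symm i).2
  by_contra hcon
  push_neg at hcon
  -- core claim
  have core : ∀ t : Finset (Fin n), ∃ ξ : ℤ → ℤ, t ∈ 𝒯 →
      ξ ∈ Relations A ∧ (∀ a, ξ a ≠ 0 → a ∈ t.image f) ∧
        k < (A.filter (fun a => ξ a ≠ 0)).card := by
    intro t
    by_cases ht : t ∈ 𝒯
    swap
    · exact ⟨0, fun h => absurd h ht⟩
    set T := t.image f with hT
    have hTA : T ⊆ A := by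
      intro a ha
      obtain ⟨i, -, rfl⟩ := Finset.mem_image.mp ha
      exact hfmem i
    have hTcard : T.card = m := by
      rw [Finset.card_image_of_injective _ hfinj, h𝒯m t ht]
    -- pick a relation supported in T with maximal support
    set S : Finset (ℤ → ℤ) :=
      hfin.toFinset.filter (fun ξ => ∀ a, ξ a ≠ 0 → a ∈ T) with hS
    have h0S : (0 : ℤ → ℤ) ∈ S := by
      refine Finset.mem_filter.mpr ⟨Set.Finite.mem_toFinset _ |>.mpr ?_, by simp⟩
      exact ⟨fun a => by simp, fun a _ => rfl, by simp⟩
    obtain ⟨ξ, hξS, hmax⟩ :=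
      S.exists_max_image (fun ξ => (A.filter (fun a => ξ a ≠ 0)).card) ⟨0, h0S⟩
    have hξrel : ξ ∈ Relations A := (Set.Finite.mem_toFinset _).mp (Finset.mem_filter.mp hξS).1
    have hξsupp : ∀ a, ξ a ≠ 0 → a ∈ T := (Finset.mem_filter.mp hξS).2
    set s := A.filter (fun a => ξ a ≠ 0) with hs
    have hsT : s ⊆ T := fun a ha => hξsupp a (Finset.mem_filter.mp ha).2
    by_cases hks : k < s.card
    · exact ⟨ξ, fun _ => ⟨hξrel, hξsupp, hks⟩⟩
    push_neg at hks
    -- then B := T \ s is quasi-independent of size ≥ m - k : contradiction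
    exfalso
    set B := T \ s with hB
    have hBA : B ⊆ A := (Finset.sdiff_subset).trans hTA
    have hBcard : B.card = m - s.card := by
      rw [Finset.card_sdiff_of_subset hsT, hTcard]
    have hQI : QuasiIndependent B := by
      intro η hηval hηsum b hbB
      by_contra hb0
      set η' : ℤ → ℤ := fun a => if a ∈ B then η a else 0 with hη'
      have hη'sum : ∑ a ∈ A, η' a * a = 0 := by
        have : ∀ a ∈ A, η' a * a = if a ∈ B then η a * a else 0 := by
          intro a _; simp only [hη']; split <;> simp
        rw [Finset.sum_congr rfl this, Finset.sum_ite_mem,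
          Finset.inter_eq_right.mpr hBA]
        exact hηsum
      set ζ : ℤ → ℤ := fun a => ξ a + η' a with hζ
      -- supports are disjoint
      have hdisj : ∀ a, ξ a = 0 ∨ η' a = 0 := by
        intro a
        by_cases haB : a ∈ B
        · left
          have : a ∉ s := (Finset.mem_sdiff.mp haB).2
          by_contra hne0
          exact this (Finset.mem_filter.mpr ⟨hBA haB, hne0⟩)
        · right; simp [hη', haB]
      have hζval : ∀ a, ζ a ∈ ({-1, 0, 1} : Set ℤ) := by
        intro a
        rcases hdisj a with h | h
        · simp only [hζ, h, zero_add]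
          by_cases haB : a ∈ B
          · simpa [hη', haB] using hηval a
          · simp [hη', haB]
        · simpa [hζ, h] using hξrel.1 a
      have hζrel : ζ ∈ Relations A := by
        refine ⟨hζval, ?_, ?_⟩
        · intro a haA
          have h1 : ξ a = 0 := hξrel.2.1 a haA
          have h2 : η' a = 0 := by
            have : a ∉ B := fun h => haA (hBA h)
            simp [hη', this]
          simp [hζ, h1, h2]
        · have : ∀ a ∈ A, ζ a * a = ξ a * a + η' a * a := by
            intro a _; simp [hζ, add_mul]
          rw [Finset.sum_congr rfl this, Finset.sum_add_distrib, hξrel.2.2, hη'sum]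
          simp
      have hζS : ζ ∈ S := by
        refine Finset.mem_filter.mpr ⟨(Set.Finite.mem_toFinset _).mpr hζrel, ?_⟩
        intro a ha
        rcases hdisj a with h | h
        · have : η' a ≠ 0 := by simpa [hζ, h] using ha
          have haB : a ∈ B := by
            by_contra haB; simp [hη', haB] at this
          exact (Finset.mem_sdiff.mp haB).1
        · exact hξsupp a (by simpa [hζ, h] using ha)
      -- support of ζ strictly larger
      have hsub : insert b s ⊆ A.filter (fun a => ζ a ≠ 0) := by
        intro a ha
        rcases Finset.mem_insert.mp ha with rfl | ha
        · refine Finset.mem_filter.mpr ⟨hBA hbB, ?_⟩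
          have h1 : ξ a = 0 := by
            rcases hdisj a with h | h
            · exact h
            · exfalso; apply hb0; simpa [hη', hbB] using h
          simpa [hζ, h1, hη', hbB] using hb0
        · obtain ⟨haA, haξ⟩ := Finset.mem_filter.mp ha
          refine Finset.mem_filter.mpr ⟨haA, ?_⟩
          have h2 : η' a = 0 := by
            rcases hdisj a with h | h
            · exact absurd h haξ
            · exact h
          simpa [hζ, h2] using haξ
      have hbns : b ∉ s := (Finset.mem_sdiff.mp hbB).2
      have hlt : s.card + 1 ≤ (A.filter (fun a => ζ a ≠ 0)).card := by
        calc s.card + 1 = (insert b s).card := (Finset.card_insert_of_notMem hbns).symm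
          _ ≤ _ := Finset.card_le_card hsub
      have := hmax ζ hζS
      omega
    have := hcon B hBA hQI
    omega
  choose g hg using core
  -- the map t ↦ g t is injective on 𝒯
  have hinj : Set.InjOn g 𝒯 := by
    intro t1 h1 t2 h2 heq
    by_contra hne
    obtain ⟨-, hsupp1, hbig⟩ := hg t1 h1
    obtain ⟨-, hsupp2, -⟩ := hg t2 h2
    have hsub : A.filter (fun a => g t1 a ≠ 0) ⊆ (t1 ∩ t2).image f := by
      intro a ha
      have haξ := (Finset.mem_filter.mp ha).2
      have m1 := hsupp1 a haξ
      have m2 := hsupp2 a (by rw [← heq]; exact haξ)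
      rw [Finset.image_inter _ _ hfinj]
      exact Finset.mem_inter.mpr ⟨m1, m2⟩
    have : (A.filter (fun a => g t1 a ≠ 0)).card ≤ k := by
      calc _ ≤ ((t1 ∩ t2).image f).card := Finset.card_le_card hsub
        _ = (t1 ∩ t2).card := Finset.card_image_of_injective _ hfinj
        _ ≤ k := h𝒯pair t1 h1 t2 h2 hne
    omega
  have hmaps : ∀ t ∈ 𝒯, g t ∈ hfin.toFinset := fun t ht =>
    (Set.Finite.mem_toFinset _).mpr (hg t ht).1
  have hcount : 𝒯.card ≤ hfin.toFinset.card :=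
    Finset.card_le_card_of_injOn g hmaps hinj
  rw [h𝒯card] at hcount
  rw [Set.ncard_eq_toFinset_card _ hfin] at hR
  omega
end

section
/- Suppose n is divisible by 8. Let N(k,m,n) be the maximal number of m-element subsets of {1,...,n} with pairwise intersections of size at most k. Then N(3n/8, n/2, n) ≥ c'·exp(n/17) for a universal constant c' > 0. -/
open Finset

lemma choose_mono_half {n i j : ℕ} (hij : i ≤ j) (hj : j ≤ n / 2) : n.choose i ≤ n.choose j := by
  induction j, hij using Nat.le_induction with
  | base => exact le_refl _
  | succ j hij ih =>
    exact (ih (le_trans (Nat.le_succ j) hj)).trans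
      (Nat.choose_le_succ_of_lt_half_left (Nat.lt_of_succ_le hj))

lemma count_close (n m k : ℕ) (t : Finset (Fin n)) (ht : t.card = m) :
    ((Finset.univ.powersetCard m).filter (fun s => k < (s ∩ t).card)).card
      ≤ ∑ j ∈ Finset.Icc (k+1) m, m.choose j * (tᶜ.card).choose (m - j) := by
  rw [Finset.card_eq_sum_card_fiberwise (f := fun s => (s ∩ t).card)
    (t := Finset.Icc (k+1) m) ?_]
  · refine Finset.sum_le_sum fun j _ => ?_
    have h1 : ((((Finset.univ.powersetCard m).filter (fun s => k < (s ∩ t).card)).filter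
            (fun s => (s ∩ t).card = j)).card : ℕ)
        ≤ ((t.powersetCard j) ×ˢ (tᶜ.powersetCard (m - j))).card := by
      apply Finset.card_le_card_of_injOn (fun s => (s ∩ t, s \ t))
      · intro s hs
        simp only [Finset.mem_coe, Finset.mem_filter, Finset.mem_powersetCard_univ] at hs
        obtain ⟨⟨hcard, hlt⟩, hj⟩ := hs
        simp only [Finset.mem_coe, Finset.mem_product, Finset.mem_powersetCard]
        refine ⟨⟨Finset.inter_subset_right, hj⟩, fun x hx => ?_, ?_⟩
        · simp only [Finset.mem_sdiff] at hx
          simpa using hx.2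
        · have := Finset.card_sdiff_add_card_inter s t
          omega
      · intro s₁ h₁ s₂ h₂ he
        simp only [Prod.mk.injEq] at he
        rw [← Finset.sdiff_union_inter s₁ t, ← Finset.sdiff_union_inter s₂ t,
          he.1, he.2]
    calc _ ≤ _ := h1
      _ = m.choose j * (tᶜ.card).choose (m - j) := by
          rw [Finset.card_product, Finset.card_powersetCard, Finset.card_powersetCard, ht]
  · intro s hs
    simp only [Finset.mem_coe, Finset.mem_filter, Finset.mem_powersetCard_univ] at hs
    rw [Finset.mem_coe, Finset.mem_Icc]
    refine ⟨hs.2, ?_⟩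
    calc (s ∩ t).card ≤ t.card := Finset.card_le_card Finset.inter_subset_right
      _ = m := ht

lemma bddAboveCWCB (k m n : ℕ) : BddAbove {c : ℕ | ∃ 𝒯 : Finset (Finset (Fin n)), 𝒯.card = c ∧
    (∀ t ∈ 𝒯, t.card = m) ∧
    ∀ s ∈ 𝒯, ∀ t ∈ 𝒯, s ≠ t → (s ∩ t).card ≤ k} := by
  refine ⟨2 ^ n, fun c hc => ?_⟩
  obtain ⟨𝒯, h𝒯, _⟩ := hc
  calc c = 𝒯.card := h𝒯.symm
    _ ≤ Fintype.card (Finset (Fin n)) := Finset.card_le_univ 𝒯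
    _ = 2 ^ n := by simp [Fintype.card_finset]

lemma key_nat (r : ℕ) (hr : 0 < r) :
    Nat.choose (8*r) (4*r)
      ≤ constantWeightCodeBound (3*r) (4*r) (8*r) * (r * Nat.choose (4*r) r ^ 2) := by
  set n := 8*r
  set m := 4*r
  set k := 3*r
  -- maximal family
  set S : Set (Finset (Finset (Fin n))) := {𝒯 | (∀ t ∈ 𝒯, t.card = m) ∧
    ∀ s ∈ 𝒯, ∀ t ∈ 𝒯, s ≠ t → (s ∩ t).card ≤ k} with hS
  obtain ⟨𝒯, h𝒯S, h𝒯max⟩ := Set.Finite.exists_maximalFor (f := Finset.card) S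
    (Set.toFinite S) ⟨∅, by simp [hS]⟩
  -- maximality: every m-set is close to some member
  have hcover : ∀ s : Finset (Fin n), s.card = m → ∃ t ∈ 𝒯, k < (s ∩ t).card := by
    intro s hs
    by_contra hcon
    push_neg at hcon
    have hsnot : s ∉ 𝒯 := by
      intro hsin
      have := hcon s hsin
      rw [Finset.inter_self, hs] at this
      omega
    have hins : insert s 𝒯 ∈ S := by
      constructor
      · intro t ht
        rcases Finset.mem_insert.mp ht with h | h
        · rw [h]; exact hs
        · exact h𝒯S.1 t h
      · intro a ha b hb hab
        rcases Finset.mem_insert.mp ha with h | h <;>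
          rcases Finset.mem_insert.mp hb with h' | h'
        · exact absurd (h.trans h'.symm) hab
        · rw [h]; exact hcon b h'
        · rw [h', Finset.inter_comm]; exact hcon a h
        · exact h𝒯S.2 a h b h' hab
    have := h𝒯max hins (Finset.card_le_card (Finset.subset_insert s 𝒯))
    rw [Finset.card_insert_of_notMem hsnot] at this
    omega
  -- covering bound
  have hcard : (Finset.univ.powersetCard m (α := Fin n)).card
      ≤ ∑ t ∈ 𝒯, (((Finset.univ.powersetCard m).filter (fun s => k < (s ∩ t).card))).card := by
    refine le_trans (Finset.card_le_card (t := 𝒯.biUnion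
        (fun t => (Finset.univ.powersetCard m).filter (fun s => k < (s ∩ t).card))) ?_)
      Finset.card_biUnion_le
    intro s hs
    have hsm : s.card = m := Finset.mem_powersetCard_univ.mp hs
    obtain ⟨t, ht, hlt⟩ := hcover s hsm
    exact Finset.mem_biUnion.mpr ⟨t, ht, Finset.mem_filter.mpr ⟨hs, hlt⟩⟩
  -- per-member bound
  have hper : ∀ t ∈ 𝒯, (((Finset.univ.powersetCard m).filter (fun s => k < (s ∩ t).card))).card
      ≤ r * Nat.choose (4*r) r ^ 2 := by
    intro t ht
    have htm : t.card = m := h𝒯S.1 t ht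
    have htcc : (tᶜ : Finset (Fin n)).card = m := by
      rw [Finset.card_compl, htm]
      simp only [Fintype.card_fin]
      omega
    refine le_trans (count_close n m k t htm) ?_
    rw [htcc]
    have hterm : ∀ j ∈ Finset.Icc (k+1) m,
        m.choose j * m.choose (m - j) ≤ Nat.choose (4*r) r ^ 2 := by
      intro j hj
      rw [Finset.mem_Icc] at hj
      have hjm : j ≤ m := hj.2
      have h1 : m.choose j = m.choose (m - j) := (Nat.choose_symm hjm).symm
      have h2 : m.choose (m - j) ≤ m.choose r := by
        apply choose_mono_half
        · omega
        · omega
      calc m.choose j * m.choose (m - j) ≤ m.choose r * m.choose r := by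
            rw [h1]; exact Nat.mul_le_mul h2 h2
        _ = Nat.choose (4*r) r ^ 2 := by rw [sq]
    calc ∑ j ∈ Finset.Icc (k+1) m, m.choose j * m.choose (m - j)
        ≤ ∑ _j ∈ Finset.Icc (k+1) m, Nat.choose (4*r) r ^ 2 := Finset.sum_le_sum hterm
      _ = (Finset.Icc (k+1) m).card * Nat.choose (4*r) r ^ 2 := by
          rw [Finset.sum_const, smul_eq_mul]
      _ = r * Nat.choose (4*r) r ^ 2 := by
          rw [Nat.card_Icc]
          congr 1
          omega
  have hfinal : (Finset.univ.powersetCard m (α := Fin n)).card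
      ≤ 𝒯.card * (r * Nat.choose (4*r) r ^ 2) :=
    hcard.trans (le_trans (Finset.sum_le_sum hper) (by rw [Finset.sum_const, smul_eq_mul]))
  have hNle : 𝒯.card ≤ constantWeightCodeBound k m n :=
    le_csSup (bddAboveCWCB k m n) ⟨𝒯, rfl, h𝒯S.1, h𝒯S.2⟩
  have hpow : (Finset.univ.powersetCard m (α := Fin n)).card = Nat.choose (8*r) (4*r) := by
    rw [Finset.card_powersetCard, Finset.card_univ, Fintype.card_fin]
  rw [hpow] at hfinal
  exact hfinal.trans (Nat.mul_le_mul_right _ hNle)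

lemma choose_real_bound (r : ℕ) : ((4*r).choose r : ℝ) ≤ 4^r * Real.exp r := by
  have h1 : ((4*r).choose r : ℕ) * r.factorial ≤ (4*r)^r := by
    rw [mul_comm, ← Nat.descFactorial_eq_factorial_mul_choose]
    exact Nat.descFactorial_le_pow _ _
  have h1' : ((4*r).choose r : ℝ) * r.factorial ≤ ((4:ℝ)*r)^r := by
    calc ((4*r).choose r : ℝ) * r.factorial = ((((4*r).choose r) * r.factorial : ℕ) : ℝ) := by
          push_cast; ring
      _ ≤ (((4*r)^r : ℕ) : ℝ) := by exact_mod_cast h1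
      _ = ((4:ℝ)*r)^r := by push_cast; ring
  have h2 : ((r:ℝ))^r ≤ Real.exp r * r.factorial := by
    have := Real.pow_div_factorial_le_exp (x := (r:ℝ)) (Nat.cast_nonneg r) r
    have hfac : (0:ℝ) < r.factorial := by exact_mod_cast r.factorial_pos
    rw [div_le_iff₀ hfac] at this
    exact this
  have hfac : (0:ℝ) < r.factorial := by exact_mod_cast r.factorial_pos
  rw [← mul_le_mul_iff_of_pos_right hfac]
  calc ((4*r).choose r : ℝ) * r.factorial ≤ ((4:ℝ)*r)^r := h1'
    _ = 4^r * ((r:ℝ))^r := by rw [mul_pow]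
    _ ≤ 4^r * (Real.exp r * r.factorial) := by
        apply mul_le_mul_of_nonneg_left h2 (by positivity)
    _ = 4^r * Real.exp r * r.factorial := by ring

theorem gilbert_varshamov_type_bound :
    ∃ c' : ℝ, 0 < c' ∧
      ∀ n : ℕ, 8 ∣ n →
        c' * Real.exp (n / 17) ≤ constantWeightCodeBound (3 * n / 8) (n / 2) n := by
  refine ⟨1/200, by norm_num, ?_⟩
  rintro n ⟨r, rfl⟩
  have e1 : 3 * (8 * r) / 8 = 3 * r := by omega
  have e2 : (8 * r) / 2 = 4 * r := by omega
  rw [e1, e2]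
  rcases Nat.eq_zero_or_pos r with rfl | hr
  · -- r = 0
    have h1 : (1:ℕ) ≤ constantWeightCodeBound (3*0) (4*0) (8*0) := by
      apply le_csSup (bddAboveCWCB _ _ _)
      refine ⟨{∅}, by simp, by simp, ?_⟩
      intro s hs t ht hst
      simp only [Finset.mem_singleton] at hs ht
      exact absurd (hs.trans ht.symm) hst
    have h1' : (1:ℝ) ≤ (constantWeightCodeBound (3*0) (4*0) (8*0) : ℝ) := by exact_mod_cast h1
    have hexp : (((8*0 : ℕ) : ℝ))/17 = 0 := by norm_num
    rw [hexp, Real.exp_zero]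
    linarith [h1']
  · set N := constantWeightCodeBound (3*r) (4*r) (8*r) with hN
    set x := (r : ℝ) with hxdef
    have hx1 : (1:ℝ) ≤ x := by rw [hxdef]; exact_mod_cast hr
    have hx0 : (0:ℝ) ≤ x := by linarith
    -- central binomial lower bound
    have hcb : (4:ℕ)^(4*r) ≤ 8*r * ((8*r).choose (4*r)) := by
      have := Nat.four_pow_le_two_mul_self_mul_centralBinom (4*r) (by omega)
      have hc : Nat.centralBinom (4*r) = (8*r).choose (4*r) := by
        unfold Nat.centralBinom
        congr 1
        omega
      rw [hc] at this
      calc (4:ℕ)^(4*r) ≤ 2*(4*r) * ((8*r).choose (4*r)) := this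
        _ = 8*r * ((8*r).choose (4*r)) := by ring_nf
    have hkey := key_nat r hr
    -- combine in ℝ
    have hC := choose_real_bound r
    rw [← hxdef] at hC
    have hCnn : (0:ℝ) ≤ ((4*r).choose r : ℝ) := by positivity
    have hreal : (4:ℝ)^(4*r) ≤ 8*x * ((N:ℝ) * (x * (4^r * Real.exp x)^2)) := by
      calc (4:ℝ)^(4*r) = (((4:ℕ)^(4*r) : ℕ) : ℝ) := by push_cast; ring
        _ ≤ ((8*r * ((8*r).choose (4*r)) : ℕ) : ℝ) := by exact_mod_cast hcb
        _ ≤ ((8*r * (N * (r * ((4*r).choose r)^2)) : ℕ) : ℝ) := by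
            exact_mod_cast Nat.mul_le_mul_left _ hkey
        _ = 8*x * ((N:ℝ) * (x * (((4*r).choose r : ℝ))^2)) := by push_cast; ring
        _ ≤ 8*x * ((N:ℝ) * (x * (4^r * Real.exp x)^2)) := by
            gcongr
    -- rearrange: 16^r ≤ 8 x^2 exp(2x) N
    have h16 : (16:ℝ)^r ≤ 8 * x^2 * Real.exp (2*x) * N := by
      have hexp2 : Real.exp x ^ 2 = Real.exp (2*x) := by
        rw [← Real.exp_nat_mul]; norm_num
      have hpow : (4:ℝ)^(4*r) = (16:ℝ)^r * (16:ℝ)^r := by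
        rw [pow_mul, ← mul_pow]
        norm_num
      have h256 : ((4:ℝ)^r * Real.exp x)^2 = 16^r * Real.exp (2*x) := by
        rw [mul_pow, ← pow_mul, mul_comm r 2, pow_mul, sq (Real.exp x), ← Real.exp_add]
        norm_num
        ring_nf
      rw [hpow, h256] at hreal
      have h16pos : (0:ℝ) < (16:ℝ)^r := by positivity
      nlinarith [hreal, h16pos]
    -- final
    have hdenompos : (0:ℝ) < 8 * x^2 * Real.exp (2*x) := by positivity
    have hmain : (1/200 : ℝ) * Real.exp ((8*r : ℕ) / 17) * (8 * x^2 * Real.exp (2*x)) ≤ (16:ℝ)^r := by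
      have hcast : ((8*r : ℕ) : ℝ) = 8*x := by push_cast; ring
      rw [hcast]
      have h16exp : (16:ℝ)^r = Real.exp (x * (4 * Real.log 2)) := by
        rw [hxdef]
        rw [show (4:ℝ) * Real.log 2 = Real.log 16 by
              rw [show (16:ℝ) = 2^4 by norm_num, Real.log_pow]; push_cast; ring]
        rw [Real.exp_nat_mul, Real.exp_log (by norm_num : (0:ℝ) < 16)]
      rw [h16exp]
      have hq : (1/25 : ℝ) * x^2 ≤ Real.exp ((3/10)*x) := by
        have := Real.quadratic_le_exp_of_nonneg (x := (3/10)*x) (by positivity)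
        nlinarith [this, hx0]
      have hlog2 : (0.6931471803 : ℝ) < Real.log 2 := Real.log_two_gt_d9
      calc (1/200 : ℝ) * Real.exp (8*x/17) * (8 * x^2 * Real.exp (2*x))
          = (1/25) * x^2 * (Real.exp (8*x/17) * Real.exp (2*x)) := by ring
        _ = (1/25) * x^2 * Real.exp (8*x/17 + 2*x) := by rw [Real.exp_add]
        _ ≤ Real.exp ((3/10)*x) * Real.exp (8*x/17 + 2*x) := by
            apply mul_le_mul_of_nonneg_right hq (Real.exp_pos _).le
        _ = Real.exp ((3/10)*x + (8*x/17 + 2*x)) := (Real.exp_add _ _).symm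
        _ ≤ Real.exp (x * (4 * Real.log 2)) := by
            apply Real.exp_le_exp.mpr
            nlinarith [hlog2, hx0]
    have hfin : (1/200:ℝ) * Real.exp (((8*r:ℕ):ℝ)/17) * (8*x^2*Real.exp (2*x))
        ≤ (N:ℝ) * (8*x^2*Real.exp (2*x)) := by
      calc (1/200:ℝ) * Real.exp (((8*r:ℕ):ℝ)/17) * (8*x^2*Real.exp (2*x))
          ≤ (16:ℝ)^r := hmain
        _ ≤ 8*x^2*Real.exp (2*x) * N := h16
        _ = (N:ℝ) * (8*x^2*Real.exp (2*x)) := by ring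
    exact le_of_mul_le_mul_right hfin hdenompos
end
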